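/- arXiv:1612.06725 — 4 statements merged into one kernel-verified Lean document; each statement's English description precedes it below -/
import Mathlib

section
/- Many vertices force a single edge. Let (i_1, …, i_k) be a sequence of indices and consider the cyclic edge sequence {i_1,i_2}, {i_2,i_3}, …, {i_k,i_1} of unordered pairs. If the number of distinct indices satisfies |{i_1, …, i_k}| > 1 + k/2, then there exists an unordered pair {i,j} that occurs exactly once among the k edges of the cyclic edge sequence. -/
/-- **Many vertices force a single edge.** If `(i_1, …, i_k)` is a sequence of indices whose
number of distinct values exceeds `1 + k/2`, then in the cyclic edge sequence
`{i_1,i_2}, {i_2,i_3}, …, {i_k,i_1}` some unordered pair occurs exactly once. -/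
theorem exists_single_edge_of_many_vertices (k : ℕ) [NeZero k] (i : Fin k → ℕ)
    (hcard : 2 + k < 2 * (Finset.univ.image i).card) :
    ∃ l₀ : Fin k, ∀ l : Fin k,
      s(i l, i (l + 1)) = s(i l₀, i (l₀ + 1)) → l = l₀ := by
  obtain ⟨m, rfl⟩ : ∃ m, k = m + 1 := ⟨k - 1, (Nat.succ_pred_eq_of_pos (NeZero.pos k)).symm⟩
  by_contra hcon
  push_neg at hcon
  set f : Fin (m+1) → Sym2 ℕ := fun l => s(i l, i (l + 1)) with hf
  -- every fiber of f has at least two elements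
  have h2 : ∀ e ∈ Finset.univ.image f, 2 ≤ (Finset.univ.filter (fun l => f l = e)).card := by
    intro e he
    obtain ⟨l₀, -, rfl⟩ := Finset.mem_image.mp he
    obtain ⟨l, hl, hne⟩ := hcon l₀
    have hsub : ({l, l₀} : Finset (Fin (m+1))) ⊆ Finset.univ.filter (fun l' => f l' = f l₀) := by
      intro x hx
      simp only [Finset.mem_insert, Finset.mem_singleton] at hx
      rcases hx with rfl | rfl <;>
        simp only [Finset.mem_filter, Finset.mem_univ, true_and, hf]
      exact hl
    calc 2 = ({l, l₀} : Finset (Fin (m+1))).card := by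
            rw [Finset.card_insert_of_notMem (by simpa using hne), Finset.card_singleton]
      _ ≤ _ := Finset.card_le_card hsub
  have hcount : 2 * (Finset.univ.image f).card ≤ m + 1 := by
    calc 2 * (Finset.univ.image f).card ≤ (Finset.univ : Finset (Fin (m+1))).card :=
          Finset.mul_card_image_le_card _ 2 h2
      _ = m + 1 := by simp
  -- first-occurrence function
  have hne : ∀ v ∈ Finset.univ.image i, (Finset.univ.filter (fun l => i l = v)).Nonempty := by
    intro v hv
    obtain ⟨l, -, rfl⟩ := Finset.mem_image.mp hv
    exact ⟨l, by simp⟩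
  classical
  set M : ℕ → Fin (m+1) := fun v =>
    if h : (Finset.univ.filter (fun l => i l = v)).Nonempty then
      (Finset.univ.filter (fun l => i l = v)).min' h else 0 with hM
  have hMi : ∀ v ∈ Finset.univ.image i, i (M v) = v := by
    intro v hv
    have h := hne v hv
    have := Finset.min'_mem _ h
    simp only [hM, dif_pos h]
    simpa using Finset.min'_mem _ h
  have hMmin : ∀ v ∈ Finset.univ.image i, ∀ l : Fin (m+1), i l = v → M v ≤ l := by
    intro v hv l hl
    have h := hne v hv
    simp only [hM, dif_pos h]
    exact Finset.min'_le _ _ (by simpa using hl)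
  have hMne : ∀ v ∈ (Finset.univ.image i).erase (i 0), M v ≠ 0 := by
    intro v hv h0
    have hv' := Finset.mem_of_mem_erase hv
    have : i (M v) = v := hMi v hv'
    rw [h0] at this
    exact (Finset.ne_of_mem_erase hv) this.symm
  -- injection from erased vertex set into edge set
  have hinj : ((Finset.univ.image i).erase (i 0)).card ≤ (Finset.univ.image f).card := by
    apply Finset.card_le_card_of_injOn (fun v => f (M v - 1))
    · intro v hv
      exact Finset.mem_image_of_mem f (Finset.mem_univ _)
    · intro v hv w hw heq
      by_contra hvw
      have hv' := Finset.mem_of_mem_erase hv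
      have hw' := Finset.mem_of_mem_erase hw
      have hval : ∀ u ∈ (Finset.univ.image i).erase (i 0), ((M u - 1 : Fin (m+1)) : ℕ) = (M u : ℕ) - 1 := by
        intro u hu
        rw [Fin.coe_sub_one, if_neg (hMne u hu)]
      have hvpos : (M v : ℕ) ≠ 0 := fun h => hMne v hv (Fin.ext (by simp [h]))
      have hwpos : (M w : ℕ) ≠ 0 := fun h => hMne w hw (Fin.ext (by simp [h]))
      have hsucc : ∀ u ∈ (Finset.univ.image i).erase (i 0), i (M u - 1 + 1) = u := by
        intro u hu
        rw [sub_add_cancel]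
        exact hMi u (Finset.mem_of_mem_erase hu)
      simp only [hf] at heq
      rw [hsucc v hv, hsucc w hw] at heq
      rw [Sym2.eq_iff] at heq
      rcases heq with ⟨-, h1⟩ | ⟨h1, h2⟩
      · exact hvw h1
      · -- i (M v - 1) = w and i (M w - 1) = v
        have hw2 : M w ≤ M v - 1 := hMmin w hw' _ h1
        have hv2 : M v ≤ M w - 1 := hMmin v hv' _ h2.symm
        have e1 : ((M v - 1 : Fin (m+1)) : ℕ) = (M v : ℕ) - 1 := hval v hv
        have e2 : ((M w - 1 : Fin (m+1)) : ℕ) = (M w : ℕ) - 1 := hval w hw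
        have l1 : (M w : ℕ) ≤ (M v : ℕ) - 1 := by
          have := Fin.le_iff_val_le_val.mp hw2; omega
        have l2 : (M v : ℕ) ≤ (M w : ℕ) - 1 := by
          have := Fin.le_iff_val_le_val.mp hv2; omega
        omega
  have herase : (Finset.univ.image i).card ≤ ((Finset.univ.image i).erase (i 0)).card + 1 := by
    have : i 0 ∈ Finset.univ.image i := Finset.mem_image_of_mem i (Finset.mem_univ _)
    rw [Finset.card_erase_of_mem this]
    omega
  omega
end

section
/- Quantitative count of single edges. Let (i_1, …, i_k) be a sequence of indices and consider the cyclic edge sequence {i_1,i_2}, {i_2,i_3}, …, {i_k,i_1}. If |{i_1, …, i_k}| ≥ 1 + k/2 + s for some s > 0, then there are at least 2s + 2 unordered pairs {i,j} that occur exactly once among the k edges of the cyclic edge sequence. -/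
open Finset

namespace SingleEdgeAux

/-- chains of length `n` from `a` using edges of `F`. -/
def rIn (F : Finset (Sym2 ℕ)) (a : ℕ) : ℕ → ℕ → Prop
  | 0, x => x = a
  | n+1, x => ∃ y, rIn F a n y ∧ s(y, x) ∈ F

/-- reachability from `a` using edges of `F`. -/
def Reach (F : Finset (Sym2 ℕ)) (a x : ℕ) : Prop :=
  Relation.ReflTransGen (fun u v => s(u, v) ∈ F) a x

lemma reach_iff {F : Finset (Sym2 ℕ)} {a x : ℕ} :
    Reach F a x ↔ ∃ n, rIn F a n x := by
  constructor
  · intro h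
    induction h with
    | refl => exact ⟨0, rfl⟩
    | tail _ he ih => obtain ⟨n, hn⟩ := ih; exact ⟨n + 1, _, hn, he⟩
  · rintro ⟨n, hn⟩
    induction n generalizing x with
    | zero => cases hn; exact Relation.ReflTransGen.refl
    | succ n ih => obtain ⟨y, hy, he⟩ := hn; exact (ih hy).tail he

lemma reach_symm {F : Finset (Sym2 ℕ)} {a b : ℕ} (h : Reach F a b) : Reach F b a := by
  haveI : Std.Symm (fun u v : ℕ => s(u, v) ∈ F) :=
    ⟨fun u v huv => by rwa [Sym2.eq_swap] at huv⟩
  exact (Relation.ReflTransGen.stdSymm (r := fun u v : ℕ => s(u, v) ∈ F)).symm _ _ h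

lemma reach_card (F : Finset (Sym2 ℕ)) (a : ℕ) (R : Finset ℕ)
    (hR : ∀ x ∈ R, Reach F a x) :
    R.card ≤ (F.filter fun e => ¬ e.IsDiag).card + 1 := by
  classical
  have h1 : R.card ≤ (R.erase a).card + 1 := by
    by_cases ha : a ∈ R
    · rw [Finset.card_erase_of_mem ha]
      have : 1 ≤ R.card := Finset.card_pos.mpr ⟨a, ha⟩
      omega
    · rw [Finset.erase_eq_of_notMem ha]; omega
  suffices h : (R.erase a).card ≤ (F.filter fun e => ¬ e.IsDiag).card by omega
  set d : ℕ → ℕ := fun z => if h : ∃ n, rIn F a n z then Nat.find h else 0 with hd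
  have key : ∀ x, (∃ n, rIn F a n x) → x ≠ a → ∃ y, s(y, x) ∈ F ∧ d y < d x := by
    intro x hx hxa
    have hdx : d x = Nat.find hx := dif_pos hx
    have hspec : rIn F a (Nat.find hx) x := Nat.find_spec hx
    have hne : Nat.find hx ≠ 0 := by
      intro h0; rw [h0] at hspec; exact hxa hspec
    obtain ⟨m, hm⟩ := Nat.exists_eq_succ_of_ne_zero hne
    rw [hm] at hspec
    obtain ⟨y, hy, he⟩ := hspec
    refine ⟨y, he, ?_⟩
    have hy' : ∃ n, rIn F a n y := ⟨m, hy⟩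
    have hdy : d y ≤ m := by
      rw [show d y = Nat.find hy' from dif_pos hy']
      exact Nat.find_min' hy' hy
    omega
  refine Finset.card_le_card_of_injOn
    (fun x => if h : (∃ n, rIn F a n x) ∧ x ≠ a
      then s((key x h.1 h.2).choose, x) else s(0, 0)) ?_ ?_
  · intro x hx
    rw [Finset.mem_coe, Finset.mem_erase] at hx
    have hx1 : ∃ n, rIn F a n x := reach_iff.mp (hR x hx.2)
    have hcond : (∃ n, rIn F a n x) ∧ x ≠ a := ⟨hx1, hx.1⟩
    simp only [dif_pos hcond]
    obtain ⟨he, hdy⟩ := (key x hcond.1 hcond.2).choose_spec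
    rw [Finset.mem_coe, Finset.mem_filter]
    refine ⟨he, ?_⟩
    rw [Sym2.mk_isDiag_iff]
    intro h; rw [h] at hdy; omega
  · intro x hx x' hx' heq
    rw [Finset.coe_erase, Set.mem_diff, Finset.mem_coe] at hx hx'
    have hc : (∃ n, rIn F a n x) ∧ x ≠ a :=
      ⟨reach_iff.mp (hR x hx.1), by simpa using hx.2⟩
    have hc' : (∃ n, rIn F a n x') ∧ x' ≠ a :=
      ⟨reach_iff.mp (hR x' hx'.1), by simpa using hx'.2⟩
    simp only [dif_pos hc, dif_pos hc'] at heq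
    obtain ⟨_, hdy⟩ := (key x hc.1 hc.2).choose_spec
    obtain ⟨_, hdy'⟩ := (key x' hc'.1 hc'.2).choose_spec
    rw [Sym2.eq_iff] at heq
    rcases heq with ⟨_, h2⟩ | ⟨h1, h2⟩
    · exact h2
    · rw [h1] at hdy; rw [← h2] at hdy'; omega

lemma walk_reach (k : ℕ) [NeZero k] (i : Fin k → ℕ) (F : Finset (Sym2 ℕ))
    (hF : ∀ l : Fin k, Reach F (i l) (i (l + 1))) (l : Fin k) : Reach F (i 0) (i l) := by
  have key : ∀ m (h : m < k), Reach F (i 0) (i ⟨m, h⟩) := by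
    intro m
    induction m with
    | zero =>
      intro h
      have : (⟨0, h⟩ : Fin k) = 0 := by
        apply Fin.ext; simp
      rw [this]
      exact Relation.ReflTransGen.refl
    | succ m ih =>
      intro h
      have hm : m < k := Nat.lt_of_succ_lt h
      have hstep := hF ⟨m, hm⟩
      have heq : (⟨m, hm⟩ : Fin k) + 1 = ⟨m + 1, h⟩ := by
        apply Fin.ext
        rw [Fin.add_def]
        simp only [Fin.val_one']
        have hk : 1 ≤ k := Nat.one_le_iff_ne_zero.mpr (NeZero.ne k)
        rcases Nat.lt_or_ge 1 k with h1 | h1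
        · rw [Nat.mod_eq_of_lt h1, Nat.mod_eq_of_lt h]
        · omega
      rw [heq] at hstep
      exact (ih hm).trans hstep
  have : l = ⟨l.1, l.2⟩ := rfl
  rw [this]; exact key l.1 l.2

lemma sum_shift (k : ℕ) [NeZero k] (f : Fin k → ZMod 2) :
    ∑ l : Fin k, (f (l + 1) - f l) = 0 := by
  rw [Finset.sum_sub_distrib]
  have : (∑ l : Fin k, f (l + 1)) = ∑ l : Fin k, f l :=
    Fintype.sum_equiv (Equiv.addRight (1 : Fin k)) _ _ (fun l => rfl)
  rw [this, sub_self]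

end SingleEdgeAux

open Finset SingleEdgeAux

/-- **Quantitative count of single edges.** If the number of distinct values of a sequence
`(i_1, …, i_k)` satisfies `|{i_1, …, i_k}| ≥ 1 + k/2 + s` for some `s > 0`, then at least
`2s + 2` unordered pairs occur exactly once among the `k` edges of the cyclic edge sequence
`{i_1,i_2}, {i_2,i_3}, …, {i_k,i_1}`. -/
theorem single_edge_count_of_many_vertices (k : ℕ) [NeZero k] (i : Fin k → ℕ)
    (s : ℕ) (hs : 0 < s)
    (hcard : 2 + k + 2 * s ≤ 2 * (Finset.univ.image i).card) :
    2 * s + 2 ≤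
      (((Finset.univ : Finset (Fin k)).image fun l => s(i l, i (l + 1))).filter
        fun e => ((Finset.univ : Finset (Fin k)).filter
          fun l => s(i l, i (l + 1)) = e).card = 1).card := by
  classical
  set V : Finset ℕ := Finset.univ.image i with hV
  set E : Finset (Sym2 ℕ) := Finset.univ.image (fun l : Fin k => s(i l, i (l + 1))) with hE
  set mult : Sym2 ℕ → ℕ :=
    fun e => (Finset.univ.filter fun l : Fin k => s(i l, i (l + 1)) = e).card with hmult
  suffices hsuf : 2 * s + 2 ≤ (E.filter fun e => mult e = 1).card from hsuf
  have hsum : ∑ e ∈ E, mult e = k := by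
    have := Finset.card_eq_sum_card_fiberwise
      (f := fun l : Fin k => s(i l, i (l + 1))) (s := Finset.univ) (t := E)
      (fun l _ => Finset.mem_image_of_mem _ (Finset.mem_univ l))
    rw [Finset.card_univ, Fintype.card_fin] at this
    exact this.symm
  have hmult1 : ∀ e ∈ E, 1 ≤ mult e := by
    intro e he
    obtain ⟨l, -, hl⟩ := Finset.mem_image.mp he
    exact Finset.card_pos.mpr ⟨l, Finset.mem_filter.mpr ⟨Finset.mem_univ l, hl⟩⟩
  set S := E.filter (fun e => mult e = 1) with hS
  have step2 : 2 * E.card ≤ k + S.card := by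
    have hpt : ∀ e ∈ E, 2 ≤ mult e + (if mult e = 1 then 1 else 0) := by
      intro e he
      have := hmult1 e he
      split <;> omega
    calc 2 * E.card = ∑ _e ∈ E, 2 := by rw [Finset.sum_const, smul_eq_mul, mul_comm]
      _ ≤ ∑ e ∈ E, (mult e + if mult e = 1 then 1 else 0) := Finset.sum_le_sum hpt
      _ = (∑ e ∈ E, mult e) + ∑ e ∈ E, (if mult e = 1 then 1 else 0) :=
          Finset.sum_add_distrib
      _ = k + S.card := by rw [hsum, hS, Finset.card_filter]
  have hwalkE : ∀ l : Fin k, Reach E (i l) (i (l + 1)) := fun l =>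
    Relation.ReflTransGen.single (Finset.mem_image_of_mem _ (Finset.mem_univ l))
  have hVreach : ∀ x ∈ V, Reach E (i 0) x := by
    intro x hx
    obtain ⟨l, -, rfl⟩ := Finset.mem_image.mp hx
    exact walk_reach k i E hwalkE l
  have hv1 : V.card ≤ (E.filter fun e => ¬ e.IsDiag).card + 1 := reach_card E (i 0) V hVreach
  have hfsub : (E.filter fun e => ¬ e.IsDiag).card ≤ E.card := Finset.card_filter_le _ _
  by_cases hcase : V.card ≤ E.card
  · omega
  · have hEv : V.card = E.card + 1 := by omega
    exfalso
    have hfil : (E.filter fun e => ¬ e.IsDiag) = E :=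
      Finset.eq_of_subset_of_card_le (Finset.filter_subset _ _) (by omega)
    have hdiag : ∀ e ∈ E, ¬ e.IsDiag := by
      intro e he
      rw [← hfil] at he
      exact (Finset.mem_filter.mp he).2
    have hall : ∀ e ∈ E, 2 ≤ mult e := by
      intro e he
      obtain ⟨l₀, -, hl₀⟩ := Finset.mem_image.mp he
      have hndiag := hdiag e he
      rw [← hl₀, Sym2.mk_isDiag_iff] at hndiag
      have hbA : ¬ Reach (E.erase e) (i l₀) (i (l₀ + 1)) := by
        intro hB
        have hstep : ∀ l : Fin k, Reach (E.erase e) (i l) (i (l + 1)) := by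
          intro l
          by_cases hle : s(i l, i (l + 1)) = e
          · rw [← hl₀, Sym2.eq_iff] at hle
            rcases hle with ⟨h1, h2⟩ | ⟨h1, h2⟩
            · rw [h1, h2]; exact hB
            · rw [h1, h2]; exact reach_symm hB
          · exact Relation.ReflTransGen.single
              (Finset.mem_erase.mpr ⟨hle, Finset.mem_image_of_mem _ (Finset.mem_univ l)⟩)
        have hR' : ∀ x ∈ V, Reach (E.erase e) (i 0) x := by
          intro x hx
          obtain ⟨l, -, rfl⟩ := Finset.mem_image.mp hx
          exact walk_reach k i _ hstep l
        have h2 := reach_card (E.erase e) (i 0) V hR'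
        have h3 : ((E.erase e).filter fun e => ¬ e.IsDiag).card ≤ (E.erase e).card :=
          Finset.card_filter_le _ _
        have h4 : (E.erase e).card = E.card - 1 := Finset.card_erase_of_mem he
        have h5 : 1 ≤ E.card := Finset.card_pos.mpr ⟨e, he⟩
        omega
      set P : ℕ → Prop := fun x => Reach (E.erase e) (i l₀) x with hP
      have hchar : ∀ l : Fin k, (s(i l, i (l + 1)) = e) ↔ ¬ (P (i l) ↔ P (i (l + 1))) := by
        intro l
        constructor
        · intro hle
          rw [← hl₀, Sym2.eq_iff] at hle
          rcases hle with ⟨h1, h2⟩ | ⟨h1, h2⟩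
          · rw [h1, h2]
            intro hiff
            exact hbA (hiff.mp Relation.ReflTransGen.refl)
          · rw [h1, h2]
            intro hiff
            exact hbA (hiff.mpr Relation.ReflTransGen.refl)
        · intro hniff
          by_contra hne
          apply hniff
          have hmem : s(i l, i (l + 1)) ∈ E.erase e :=
            Finset.mem_erase.mpr ⟨hne, Finset.mem_image_of_mem _ (Finset.mem_univ l)⟩
          constructor
          · intro h; exact h.tail hmem
          · intro h; refine h.tail ?_; rwa [Sym2.eq_swap]
      have heven : 2 ∣ mult e := by
        have h0 := sum_shift k (fun l => if P (i l) then (1 : ZMod 2) else 0)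
        have h1 : ∀ l : Fin k,
            ((fun l => if P (i l) then (1 : ZMod 2) else 0) (l + 1)
              - (fun l => if P (i l) then (1 : ZMod 2) else 0) l)
            = if ¬ (P (i l) ↔ P (i (l + 1))) then 1 else 0 := by
          intro l
          by_cases hp : P (i l) <;> by_cases hq : P (i (l + 1)) <;>
            simp [hp, hq] <;> decide
        rw [Finset.sum_congr rfl (fun l _ => h1 l), Finset.sum_boole] at h0
        have hcardeq : (Finset.univ.filter fun l : Fin k => ¬ (P (i l) ↔ P (i (l + 1)))) =
            (Finset.univ.filter fun l : Fin k => s(i l, i (l + 1)) = e) := by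
          apply Finset.filter_congr
          intro l _
          exact (hchar l).symm
        rw [hcardeq] at h0
        exact (ZMod.natCast_eq_zero_iff _ 2).mp h0
      have := hmult1 e he
      omega
    have hfin : 2 * E.card ≤ ∑ e ∈ E, mult e := by
      calc 2 * E.card = ∑ _e ∈ E, 2 := by rw [Finset.sum_const, smul_eq_mul, mul_comm]
        _ ≤ _ := Finset.sum_le_sum hall
    omega
end

section
/- Law of large numbers for Curie-Weiss variables. Let ξ_1, …, ξ_M be P_β^M-distributed Curie-Weiss random variables. Then the mean (1/M) Σ_{i=1}^M ξ_i converges in distribution as M → ∞, namely to the Dirac measure δ_0 if β ≤ 1, and to the measure (1/2)(δ_{−m(β)} + δ_{m(β)}) if β > 1, where m(β) is the unique strictly positive solution of tanh(βm) = m. -/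
open MeasureTheory ProbabilityTheory Filter
open scoped BoundedContinuousFunction ENNReal

/-- The unnormalized Curie-Weiss weight `exp((β/(2M)) (∑ x_i)²)` of a spin
configuration `x ∈ {-1,1}^M`. -/
noncomputable def cwWeight (β : ℝ) (M : ℕ) (x : Fin M → ℝ) : ℝ :=
  Real.exp (β / (2 * M) * (∑ i, x i) ^ 2)

/-- The Curie-Weiss partition function `Z_{β,M}`. -/
noncomputable def cwZ (β : ℝ) (M : ℕ) : ℝ :=
  ∑ x ∈ Fintype.piFinset (fun _ : Fin M => ({-1, 1} : Finset ℝ)), cwWeight β M x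

/-- The Curie-Weiss measure `P_β^M` on spin configurations in `{-1,1}^M ⊆ ℝ^M`:
`P_β^M({x}) = Z⁻¹ exp((β/(2M)) (∑ x_i)²)`. -/
noncomputable def curieWeiss (β : ℝ) (M : ℕ) : Measure (Fin M → ℝ) :=
  ∑ x ∈ Fintype.piFinset (fun _ : Fin M => ({-1, 1} : Finset ℝ)),
    ENNReal.ofReal (cwWeight β M x / cwZ β M) • Measure.dirac x


namespace CW
open Real Set Finset


/-- artanh -/
noncomputable def L (m : ℝ) : ℝ := Real.log ((1+m)/(1-m)) / 2

lemma L_zero : L 0 = 0 := by simp [L]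

lemma exp_two_mul_L {m : ℝ} (h1 : -1 < m) (h2 : m < 1) :
    Real.exp (2 * L m) = (1+m)/(1-m) := by
  have hm1 : (0:ℝ) < 1 - m := by linarith
  have hm2 : (0:ℝ) < 1 + m := by linarith
  rw [L, mul_div_cancel₀ _ (two_ne_zero)]
  exact Real.exp_log (by positivity)

lemma tanh_eq_iff {y m : ℝ} (h1 : -1 < m) (h2 : m < 1) :
    Real.tanh y = m ↔ y = L m := by
  have hm1 : (0:ℝ) < 1 - m := by linarith
  have ht : (0:ℝ) < Real.exp y := Real.exp_pos y
  have e2 : Real.exp (2*y) = Real.exp y ^ 2 := by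
    rw [show (2:ℝ)*y = y+y by ring, Real.exp_add, sq]
  have main : Real.tanh y = m ↔ Real.exp (2*y) = (1+m)/(1-m) := by
    rw [Real.tanh_eq_sinh_div_cosh, div_eq_iff (Real.cosh_pos y).ne', Real.sinh_eq,
      Real.cosh_eq, Real.exp_neg]
    constructor
    · intro h
      rw [e2, eq_div_iff hm1.ne']
      field_simp at h
      nlinarith [ht]
    · intro h
      rw [e2, eq_div_iff hm1.ne'] at h
      field_simp
      nlinarith [ht]
  rw [main, ← exp_two_mul_L h1 h2, Real.exp_eq_exp]
  constructor <;> intro h <;> linarith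

lemma tanh_L {m : ℝ} (h1 : -1 < m) (h2 : m < 1) : Real.tanh (L m) = m :=
  (tanh_eq_iff h1 h2).mpr rfl

lemma L_eq {m : ℝ} (h1 : -1 < m) (h2 : m < 1) :
    L m = (Real.log (1+m) - Real.log (1-m)) / 2 := by
  rw [L, Real.log_div (by linarith : (0:ℝ) < 1+m).ne' (by linarith : (0:ℝ) < 1-m).ne']

lemma hasDerivAt_L {m : ℝ} (h1 : -1 < m) (h2 : m < 1) :
    HasDerivAt L (1/(1-m^2)) m := by
  have hm1 : (0:ℝ) < 1 - m := by linarith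
  have hm2 : (0:ℝ) < 1 + m := by linarith
  have hlog1 : HasDerivAt (fun x : ℝ => Real.log (1+x)) (1/(1+m)) m := by
    simpa using ((hasDerivAt_id m).const_add 1).log hm2.ne'
  have hlog2 : HasDerivAt (fun x : ℝ => Real.log (1-x)) ((-1)/(1-m)) m := by
    simpa using ((hasDerivAt_id m).const_sub 1).log hm1.ne'
  have hd : HasDerivAt (fun x : ℝ => (Real.log (1+x) - Real.log (1-x))/2)
      ((1/(1+m) - (-1)/(1-m))/2) m := (hlog1.sub hlog2).div_const 2
  have heq : (fun x : ℝ => L x) =ᶠ[nhds m] fun x => (Real.log (1+x) - Real.log (1-x))/2 := by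
    filter_upwards [Ioo_mem_nhds h1 h2] with x hx using L_eq hx.1 hx.2
  have := hd.congr_of_eventuallyEq heq
  refine this.congr_deriv ?_
  have hsq : (1 - m^2) ≠ 0 := by nlinarith
  field_simp
  ring

lemma continuousOn_L : ContinuousOn L (Set.Ioo (-1:ℝ) 1) := fun x hx =>
  ((hasDerivAt_L hx.1 hx.2).continuousAt).continuousWithinAt

lemma L_gt_self {m : ℝ} (h0 : 0 < m) (h1 : m < 1) : m < L m := by
  have key : StrictMonoOn (fun m => L m - m) (Set.Icc 0 m) := by
    apply strictMonoOn_of_deriv_pos (convex_Icc 0 m)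
    · apply ContinuousOn.sub _ continuousOn_id
      apply continuousOn_L.mono
      intro x hx
      simp only [Set.mem_Icc] at hx
      exact ⟨by linarith [hx.1], by linarith [hx.2]⟩
    · intro x hx
      rw [interior_Icc, Set.mem_Ioo] at hx
      have hx1 : x < 1 := lt_trans hx.2 h1
      have hx0 : -1 < x := by linarith [hx.1]
      have hd : HasDerivAt (fun m => L m - m) (1/(1-x^2) - 1) x :=
        (hasDerivAt_L hx0 hx1).sub (hasDerivAt_id x)
      rw [hd.deriv]
      have hsq : (0:ℝ) < 1 - x^2 := by nlinarith
      rw [sub_pos, lt_div_iff₀ hsq]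
      nlinarith [hx.1]
  have := key (Set.left_mem_Icc.2 h0.le) (Set.right_mem_Icc.2 h0.le) h0
  simp only [L_zero, sub_zero, zero_sub] at this
  linarith

lemma L_lt_self_div {m : ℝ} (h0 : 0 < m) (h1 : m < 1) : L m < m / (1-m^2) := by
  have umono : StrictMonoOn (fun m => m/(1-m^2) - L m) (Set.Icc 0 m) := by
    apply strictMonoOn_of_deriv_pos (convex_Icc 0 m)
    · apply ContinuousOn.sub
      · apply ContinuousOn.div continuousOn_id (by fun_prop)
        intro x hx
        simp only [Set.mem_Icc] at hx
        nlinarith [hx.1, hx.2]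
      · apply continuousOn_L.mono
        intro x hx
        simp only [Set.mem_Icc] at hx
        exact ⟨by linarith [hx.1], by linarith [hx.2]⟩
    · intro x hx
      rw [interior_Icc, Set.mem_Ioo] at hx
      have hx1 : x < 1 := lt_trans hx.2 h1
      have hx0 : (0:ℝ) < x := hx.1
      have hsq : (0:ℝ) < 1 - x^2 := by nlinarith
      have hd1 : HasDerivAt (fun m : ℝ => m/(1-m^2)) (((1-x^2) - x*(-(2*x)))/(1-x^2)^2) x := by
        have ha : HasDerivAt (fun m : ℝ => 1 - m^2) (-(2*x)) x := by
          have := (hasDerivAt_pow 2 x).const_sub 1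
          simpa using this
        exact ((hasDerivAt_id' x).div ha hsq.ne').congr_deriv (by ring)
      have hd : HasDerivAt (fun m => m/(1-m^2) - L m)
          ((((1-x^2) - x*(-(2*x)))/(1-x^2)^2) - 1/(1-x^2)) x :=
        hd1.sub (hasDerivAt_L (by linarith) hx1)
      rw [hd.deriv, sub_pos, div_lt_div_iff₀ hsq (by positivity)]
      nlinarith [mul_pos (mul_pos hx0 hx0) hsq]
  have := umono (Set.left_mem_Icc.2 h0.le) (Set.right_mem_Icc.2 h0.le) h0
  simp only [L_zero, sub_zero, zero_div, zero_sub, neg_neg] at this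
  linarith

/-- `L m / m` is strictly monotone on `(0,1)`. -/
lemma L_div_strictMonoOn : StrictMonoOn (fun m => L m / m) (Set.Ioo (0:ℝ) 1) := by
  apply strictMonoOn_of_deriv_pos (convex_Ioo 0 1)
  · apply ContinuousOn.div
    · apply continuousOn_L.mono
      intro x hx
      exact ⟨by linarith [hx.1], hx.2⟩
    · exact continuousOn_id
    · intro x hx
      exact hx.1.ne'
  · intro x hx
    rw [interior_Ioo, Set.mem_Ioo] at hx
    obtain ⟨hx0, hx1⟩ := hx
    have hd : HasDerivAt (fun m => L m / m) ((1/(1-x^2) * x - L x * 1)/x^2) x :=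
      (hasDerivAt_L (by linarith) hx1).div (hasDerivAt_id x) hx0.ne'
    rw [hd.deriv]
    apply div_pos _ (by positivity)
    have h1 := L_lt_self_div hx0 hx1
    have h2 : 1/(1-x^2) * x = x/(1-x^2) := by ring
    linarith




lemma tanh_mem_Ioo (y : ℝ) : Real.tanh y ∈ Set.Ioo (-1 : ℝ) 1 := by
  have ht : (0:ℝ) < Real.exp y := Real.exp_pos y
  have ht' : (0:ℝ) < Real.exp (-y) := Real.exp_pos (-y)
  have hc : (0:ℝ) < Real.cosh y := Real.cosh_pos y
  rw [Real.tanh_eq_sinh_div_cosh]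
  constructor
  · rw [lt_div_iff₀ hc, Real.sinh_eq, Real.cosh_eq]; nlinarith
  · rw [div_lt_iff₀ hc, Real.sinh_eq, Real.cosh_eq]; nlinarith

lemma exists_fixedpoint {β : ℝ} (hβ : 1 < β) : ∃ m : ℝ, 0 < m ∧ m < 1 ∧ L m = β * m := by
  have hslope : Tendsto (slope L 0) (nhdsWithin 0 {(0:ℝ)}ᶜ) (nhds 1) := by
    have := (hasDerivAt_L (by norm_num) (by norm_num) : HasDerivAt L (1/(1-0^2)) 0)
    norm_num at this
    exact hasDerivAt_iff_tendsto_slope.mp this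
  have hev : ∀ᶠ x in nhdsWithin (0:ℝ) (Set.Ioi 0), slope L 0 x < β := by
    have h2 : Tendsto (slope L 0) (nhdsWithin 0 (Set.Ioi 0)) (nhds 1) :=
      hslope.mono_left (nhdsWithin_mono _ (fun x hx => ne_of_gt hx))
    exact h2.eventually_lt_const hβ
  have hev2 : ∀ᶠ x in nhdsWithin (0:ℝ) (Set.Ioi 0), x < 1/2 :=
    eventually_nhdsWithin_of_eventually_nhds (eventually_lt_nhds (by norm_num))
  have hev3 : ∀ᶠ x in nhdsWithin (0:ℝ) (Set.Ioi 0), 0 < x :=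
    eventually_mem_nhdsWithin
  obtain ⟨a, ha1, ha2, ha0⟩ := (hev.and (hev2.and hev3)).exists
  rw [slope_def_field, L_zero] at ha1
  simp only [sub_zero] at ha1
  have hLa : L a < β * a := by
    rw [div_lt_iff₀ ha0] at ha1
    linarith
  set ε : ℝ := min ((1-a)/2) (Real.exp (-(2*β+2))) with hε
  have hε0 : 0 < ε := lt_min (by linarith) (Real.exp_pos _)
  have hε1 : ε < 1 := lt_of_le_of_lt (min_le_right _ _)
    (by rw [Real.exp_lt_one_iff]; linarith)
  set b : ℝ := 1 - ε with hb
  have hab : a < b := by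
    have : ε ≤ (1-a)/2 := min_le_left _ _
    simp only [hb]; linarith
  have hb1 : b < 1 := by simp only [hb]; linarith
  have hb0 : 0 < b := by simp only [hb]; linarith
  have hLb : β * b < L b := by
    have h1 : Real.log ε ≤ -(2*β+2) := by
      calc Real.log ε ≤ Real.log (Real.exp (-(2*β+2))) :=
            Real.log_le_log hε0 (min_le_right _ _)
        _ = -(2*β+2) := Real.log_exp _
    have h2 : (2*β+2) ≤ Real.log ((1+b)/(1-b)) := by
      have e1 : (1:ℝ) - b = ε := by rw [hb]; ring
      have e2 : (1:ℝ) + b = 2 - ε := by rw [hb]; ring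
      rw [e1, e2]
      calc (2*β+2) = -(-(2*β+2)) := by ring
        _ ≤ -Real.log ε := by linarith
        _ = Real.log ε⁻¹ := (Real.log_inv ε).symm
        _ ≤ Real.log ((2-ε)/ε) := by
            apply Real.log_le_log (by positivity)
            rw [inv_eq_one_div]
            gcongr
            linarith
    have h3 : β + 1 ≤ L b := by rw [L]; linarith
    nlinarith
  have hcont : ContinuousOn (fun m => L m - β*m) (Set.Icc a b) := by
    apply ContinuousOn.sub (continuousOn_L.mono ?_)
      ((continuous_const.mul continuous_id).continuousOn)
    intro x hx
    exact ⟨by linarith [hx.1, ha0], by linarith [hx.2, hb1]⟩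
  have h0 : (0:ℝ) ∈ Set.Ioo (L a - β*a) (L b - β*b) := ⟨by linarith, by linarith⟩
  obtain ⟨m, hm, hgm⟩ := intermediate_value_Ioo (le_of_lt hab) hcont h0
  dsimp only at hgm
  exact ⟨m, lt_trans ha0 hm.1, lt_trans hm.2 hb1, by linarith [hgm]⟩

lemma unique_fixedpoint {β : ℝ} {m1 m2 : ℝ} (h11 : 0 < m1) (h12 : m1 < 1)
    (h1f : L m1 = β * m1) (h21 : 0 < m2) (h22 : m2 < 1) (h2f : L m2 = β * m2) :
    m1 = m2 := by
  by_contra hne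
  have key : ∀ x : ℝ, 0 < x → x < 1 → L x = β * x → L x / x = β := by
    intro x hx0 _ hxf
    rw [hxf]
    field_simp
  rcases lt_or_gt_of_ne hne with h | h
  · have := L_div_strictMonoOn ⟨h11, h12⟩ ⟨h21, h22⟩ h
    dsimp only at this
    rw [key _ h11 h12 h1f, key _ h21 h22 h2f] at this
    exact lt_irrefl _ this
  · have := L_div_strictMonoOn ⟨h21, h22⟩ ⟨h11, h12⟩ h
    dsimp only at this
    rw [key _ h11 h12 h1f, key _ h21 h22 h2f] at this
    exact lt_irrefl _ this

/-- Part 1 of the theorem. -/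
lemma part_one {β : ℝ} (hβ : 1 < β) : ∃! m : ℝ, 0 < m ∧ Real.tanh (β * m) = m := by
  obtain ⟨m, hm0, hm1, hmf⟩ := exists_fixedpoint hβ
  refine ⟨m, ⟨hm0, (tanh_eq_iff (by linarith) hm1).mpr (by linarith [hmf])⟩, ?_⟩
  rintro y ⟨hy0, hyf⟩
  have hy : y ∈ Set.Ioo (-1:ℝ) 1 := hyf ▸ tanh_mem_Ioo (β * y)
  have := (tanh_eq_iff hy.1 hy.2).mp hyf
  exact unique_fixedpoint hy0 hy.2 this.symm hm0 hm1 (by linarith [hmf])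

/-! ### The free energy -/

noncomputable def ent (p : ℝ) : ℝ := -(p * Real.log p) - (1-p) * Real.log (1-p)

lemma ent_zero : ent 0 = 0 := by simp [ent]
lemma ent_one : ent 1 = 0 := by simp [ent]

noncomputable def phi (β m : ℝ) : ℝ := β * m^2 / 2 + ent ((1+m)/2)

lemma continuous_ent : Continuous ent := by
  have h1 := Real.continuous_mul_log
  exact (h1.neg).sub (h1.comp (continuous_const.sub continuous_id))

lemma continuous_phi (β : ℝ) : Continuous (phi β) := by
  apply Continuous.add
  · exact (continuous_const.mul (continuous_pow 2)).div_const 2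
  · exact continuous_ent.comp ((continuous_const.add continuous_id).div_const 2)

lemma phi_even (β m : ℝ) : phi β (-m) = phi β m := by
  have e1 : (1 + -m)/2 = 1 - (1+m)/2 := by ring
  have e2 : (1:ℝ) - (1 - (1+m)/2) = (1+m)/2 := by ring
  simp only [phi, ent, e1, e2, neg_sq]
  ring

lemma hasDerivAt_ent {p : ℝ} (h0 : 0 < p) (h1 : p < 1) :
    HasDerivAt ent (Real.log (1-p) - Real.log p) p := by
  have hd1 : HasDerivAt (fun p : ℝ => p * Real.log p) (Real.log p + 1) p :=
    Real.hasDerivAt_mul_log h0.ne'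
  have hd2 : HasDerivAt (fun p : ℝ => (1-p) * Real.log (1-p))
      ((Real.log (1-p) + 1) * (-1)) p := by
    have hinner : HasDerivAt (fun p : ℝ => 1 - p) (-1) p := (hasDerivAt_id p).const_sub 1
    exact (Real.hasDerivAt_mul_log (by linarith : (0:ℝ) < 1-p).ne').comp p hinner
  have := (hd1.neg).sub hd2
  refine this.congr_deriv ?_
  ring

lemma hasDerivAt_phi {β m : ℝ} (h1 : -1 < m) (h2 : m < 1) :
    HasDerivAt (phi β) (β * m - L m) m := by
  have hp0 : (0:ℝ) < (1+m)/2 := by linarith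
  have hp1 : (1+m)/2 < 1 := by linarith
  have hd1 : HasDerivAt (fun m : ℝ => β * m^2 / 2) (β * m) m := by
    have := ((hasDerivAt_pow 2 m).const_mul β).div_const 2
    refine this.congr_deriv ?_
    norm_num
    ring
  have hinner : HasDerivAt (fun m : ℝ => (1+m)/2) (1/2) m := by
    have := ((hasDerivAt_id m).const_add 1).div_const 2
    simpa using this
  have hd2 : HasDerivAt (fun m : ℝ => ent ((1+m)/2))
      ((Real.log (1 - (1+m)/2) - Real.log ((1+m)/2)) * (1/2)) m := by
    exact (hasDerivAt_ent hp0 hp1).comp m hinner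
  have := hd1.add hd2
  have heq : β * m - L m =
      β * m + (Real.log (1 - (1+m)/2) - Real.log ((1+m)/2)) * (1/2) := by
    have e1 : (1:ℝ) - (1+m)/2 = (1-m)/2 := by ring
    rw [e1, L, Real.log_div (by linarith : (0:ℝ) < 1+m).ne' (by linarith : (0:ℝ) < 1-m).ne',
      Real.log_div (by linarith : (0:ℝ) < 1-m).ne' (two_ne_zero),
      Real.log_div (by linarith : (0:ℝ) < 1+m).ne' (two_ne_zero)]
    ring
  rw [heq]
  exact this

lemma phi_strictAntiOn_le_one {β : ℝ} (hβ : β ≤ 1) :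
    StrictAntiOn (phi β) (Set.Icc 0 1) := by
  apply strictAntiOn_of_deriv_neg (convex_Icc 0 1) (continuous_phi β).continuousOn
  intro x hx
  rw [interior_Icc, Set.mem_Ioo] at hx
  rw [(hasDerivAt_phi (by linarith [hx.1]) hx.2).deriv]
  have h1 := L_gt_self hx.1 hx.2
  nlinarith [hx.1]

lemma phi_strictMonoOn_below {β ms : ℝ} (hβ : 1 < β) (h0 : 0 < ms) (h1 : ms < 1)
    (hf : L ms = β * ms) : StrictMonoOn (phi β) (Set.Icc 0 ms) := by
  apply strictMonoOn_of_deriv_pos (convex_Icc 0 ms) (continuous_phi β).continuousOn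
  intro x hx
  rw [interior_Icc, Set.mem_Ioo] at hx
  have hx1 : x < 1 := lt_trans hx.2 h1
  rw [(hasDerivAt_phi (by linarith [hx.1]) hx1).deriv]
  have := L_div_strictMonoOn ⟨hx.1, hx1⟩ ⟨h0, h1⟩ hx.2
  dsimp only at this
  have hb : L ms / ms = β := by rw [hf]; field_simp
  rw [hb, div_lt_iff₀ hx.1] at this
  linarith
lemma phi_strictAntiOn_above {β ms : ℝ} (hβ : 1 < β) (h0 : 0 < ms) (h1 : ms < 1)
    (hf : L ms = β * ms) : StrictAntiOn (phi β) (Set.Icc ms 1) := by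
  apply strictAntiOn_of_deriv_neg (convex_Icc ms 1) (continuous_phi β).continuousOn
  intro x hx
  rw [interior_Icc, Set.mem_Ioo] at hx
  have hx0 : 0 < x := lt_trans h0 hx.1
  rw [(hasDerivAt_phi (by linarith) hx.2).deriv]
  have := L_div_strictMonoOn ⟨h0, h1⟩ ⟨hx0, hx.2⟩ hx.1
  dsimp only at this
  have hb : L ms / ms = β := by rw [hf]; field_simp
  rw [hb, lt_div_iff₀ hx0] at this
  linarith






/-- the max-term bounds in ℕ: `s j := k^j (M-k)^(M-j) C(M,j)`. -/
lemma nat_term_le (M k : ℕ) (hk : k ≤ M) :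
    ∀ j ≤ M, k^j * (M-k)^(M-j) * M.choose j ≤ k^k * (M-k)^(M-k) * M.choose k := by
  set s : ℕ → ℕ := fun j => k^j * (M-k)^(M-j) * M.choose j with hs
  have step_up : ∀ j, j + 1 ≤ k → s j ≤ s (j+1) := by
    intro j hj
    have hjM : j + 1 ≤ M := le_trans hj hk
    have key : (j+1) * (M-k) ≤ (M-j) * k := by
      calc (j+1) * (M-k) ≤ k * (M-j) :=
            Nat.mul_le_mul hj (Nat.sub_le_sub_left (by omega) M)
        _ = (M-j) * k := Nat.mul_comm _ _
    apply Nat.le_of_mul_le_mul_right _ (Nat.succ_pos j)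
    have hMj : M - j = (M - (j+1)) + 1 := by omega
    calc s j * (j+1)
        = (k^j * (M-k)^(M-(j+1)) * M.choose j) * ((j+1) * (M-k)) := by
          rw [hs]; dsimp only; rw [hMj, pow_succ]; ring
      _ ≤ (k^j * (M-k)^(M-(j+1)) * M.choose j) * ((M-j) * k) :=
          Nat.mul_le_mul_left _ key
      _ = s (j+1) * (j+1) := by
          rw [hs]; dsimp only
          rw [pow_succ]
          calc k ^ j * (M - k) ^ (M - (j + 1)) * M.choose j * ((M - j) * k)
              = k ^ j * k * (M - k) ^ (M - (j + 1)) * (M.choose j * (M - j)) := by ring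
            _ = k ^ j * k * (M - k) ^ (M - (j + 1)) * (M.choose (j+1) * (j+1)) := by
                rw [← Nat.choose_succ_right_eq]
            _ = k ^ j * k * (M - k) ^ (M - (j + 1)) * M.choose (j + 1) * (j + 1) := by ring
  have step_down : ∀ j, k ≤ j → j + 1 ≤ M → s (j+1) ≤ s j := by
    intro j hj hjM
    have key : (M-j) * k ≤ (j+1) * (M-k) := by
      calc (M-j) * k ≤ (M-k) * (j+1) :=
            Nat.mul_le_mul (Nat.sub_le_sub_left hj M) (by omega)
        _ = (j+1) * (M-k) := Nat.mul_comm _ _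
    apply Nat.le_of_mul_le_mul_right _ (Nat.succ_pos j)
    have hMj : M - j = (M - (j+1)) + 1 := by omega
    calc s (j+1) * (j+1)
        = (k^j * (M-k)^(M-(j+1)) * M.choose j) * ((M-j) * k) := by
          rw [hs]; dsimp only
          rw [pow_succ]
          calc k ^ j * k * (M - k) ^ (M - (j + 1)) * M.choose (j + 1) * (j + 1)
              = k ^ j * k * (M - k) ^ (M - (j + 1)) * (M.choose (j+1) * (j+1)) := by ring
            _ = k ^ j * k * (M - k) ^ (M - (j + 1)) * (M.choose j * (M - j)) := by
                rw [Nat.choose_succ_right_eq]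
            _ = k ^ j * (M - k) ^ (M - (j + 1)) * M.choose j * ((M - j) * k) := by ring
      _ ≤ (k^j * (M-k)^(M-(j+1)) * M.choose j) * ((j+1) * (M-k)) :=
          Nat.mul_le_mul_left _ key
      _ = s j * (j+1) := by
          rw [hs]; dsimp only; rw [hMj, pow_succ]; ring
  have up : ∀ d, ∀ j, j + d = k → s j ≤ s k := by
    intro d
    induction d with
    | zero => intro j hj; rw [show j = k by omega]
    | succ d ih =>
      intro j hj
      exact le_trans (step_up j (by omega)) (ih (j+1) (by omega))
  have down : ∀ d, k + d ≤ M → s (k+d) ≤ s k := by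
    intro d
    induction d with
    | zero => intro _; exact le_refl _
    | succ d ih =>
      intro hd
      exact le_trans (step_down (k+d) (by omega) (by omega)) (ih (by omega))
  intro j hj
  rcases le_or_gt j k with h | h
  · exact up (k - j) j (by omega)
  · have := down (j - k) (by omega)
    rwa [show k + (j - k) = j by omega] at this
  
lemma nat_sum_eq (M k : ℕ) (hk : k ≤ M) :
    ∑ j ∈ Finset.range (M+1), k^j * (M-k)^(M-j) * M.choose j = M^M := by
  have h := add_pow k (M-k) M
  simp only [Nat.cast_id] at h
  rw [← h]
  congr 1
  omega

lemma nat_up (M k : ℕ) (hk : k ≤ M) :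
    k^k * (M-k)^(M-k) * M.choose k ≤ M^M := by
  rw [← nat_sum_eq M k hk]
  exact Finset.single_le_sum (f := fun j => k^j * (M-k)^(M-j) * M.choose j)
    (fun j _ => Nat.zero_le _) (Finset.mem_range.mpr (by omega))

lemma nat_low (M k : ℕ) (hk : k ≤ M) :
    M^M ≤ (M+1) * (k^k * (M-k)^(M-k) * M.choose k) := by
  rw [← nat_sum_eq M k hk]
  calc ∑ j ∈ Finset.range (M+1), k^j * (M-k)^(M-j) * M.choose j
      ≤ ∑ _j ∈ Finset.range (M+1), k^k * (M-k)^(M-k) * M.choose k :=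
        Finset.sum_le_sum (fun j hj => nat_term_le M k hk j (by
          simpa using Nat.lt_succ_iff.mp (Finset.mem_range.mp hj)))
    _ = (M+1) * (k^k * (M-k)^(M-k) * M.choose k) := by
        rw [Finset.sum_const, Finset.card_range]; ring

lemma exp_M_ent (M k : ℕ) (h0 : 0 < k) (hkM : k < M) :
    Real.exp ((M:ℝ) * ent (k/M)) =
      (M:ℝ)^M / ((k:ℝ)^k * ((M-k:ℕ):ℝ)^(M-k)) := by
  have hM0 : (0:ℝ) < M := Nat.cast_pos.mpr (h0.trans hkM)
  have hk0 : (0:ℝ) < k := Nat.cast_pos.mpr h0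
  have hq0 : (0:ℝ) < ((M-k:ℕ):ℝ) := Nat.cast_pos.mpr (by omega)
  have hcast : ((M-k:ℕ):ℝ) = (M:ℝ) - k := by
    push_cast [Nat.cast_sub hkM.le]; ring
  have hMk : (0:ℝ) < (M:ℝ) - k := by rw [← hcast]; exact hq0
  have hident : (M:ℝ) * ent (k/M) =
      (M:ℝ) * Real.log M - (k:ℝ) * Real.log k - ((M:ℝ)-k) * Real.log ((M:ℝ)-k) := by
    rw [ent]
    have hq : 1 - (k:ℝ)/M = ((M:ℝ)-k)/M := by field_simp
    rw [hq, Real.log_div hk0.ne' hM0.ne', Real.log_div hMk.ne' hM0.ne']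
    field_simp
    ring
  rw [hident, hcast]
  have e1 : Real.exp ((M:ℝ) * Real.log M) = (M:ℝ)^M := by
    rw [← Real.log_pow, Real.exp_log (pow_pos hM0 M)]
  have e2 : Real.exp ((k:ℝ) * Real.log k) = (k:ℝ)^k := by
    rw [← Real.log_pow, Real.exp_log (pow_pos hk0 k)]
  have e3 : Real.exp (((M:ℝ)-k) * Real.log ((M:ℝ)-k)) = (((M-k:ℕ)):ℝ)^(M-k) := by
    rw [← hcast, ← Real.log_pow, Real.exp_log (pow_pos hq0 (M-k))]
  rw [Real.exp_sub, Real.exp_sub, e1, e2, e3, div_div, hcast]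

lemma choose_le_exp (M k : ℕ) (hM : 1 ≤ M) (hk : k ≤ M) :
    (M.choose k : ℝ) ≤ Real.exp ((M:ℝ) * ent (k/M)) := by
  rcases Nat.eq_zero_or_pos k with rfl | h0
  · simp [ent_zero]
  rcases hk.eq_or_lt with rfl | hkM
  · rw [div_self (by exact_mod_cast h0.ne' : (k:ℝ) ≠ 0), ent_one]
    simp
  · have hq0 : (0:ℝ) < ((M-k:ℕ):ℝ)^(M-k) := by
      have : (0:ℝ) < ((M-k:ℕ):ℝ) := Nat.cast_pos.mpr (by omega)
      positivity
    have hk0 : (0:ℝ) < (k:ℝ)^k := by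
      have : (0:ℝ) < (k:ℝ) := Nat.cast_pos.mpr h0
      positivity
    rw [exp_M_ent M k h0 hkM, le_div_iff₀ (by positivity)]
    have hc : ((k^k * (M-k)^(M-k) * M.choose k : ℕ) : ℝ) ≤ ((M^M : ℕ) : ℝ) := Nat.cast_le.mpr (nat_up M k hk)
    push_cast at hc
    calc (M.choose k : ℝ) * ((k:ℝ)^k * ((M-k:ℕ):ℝ)^(M-k))
        = (k:ℝ)^k * ((M-k:ℕ):ℝ)^(M-k) * (M.choose k : ℝ) := by ring
      _ ≤ (M:ℝ)^M := hc

lemma exp_le_choose (M k : ℕ) (hM : 1 ≤ M) (hk : k ≤ M) :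
    Real.exp ((M:ℝ) * ent (k/M)) ≤ ((M:ℝ)+1) * (M.choose k : ℝ) := by
  rcases Nat.eq_zero_or_pos k with rfl | h0
  · simp only [Nat.cast_zero, zero_div, ent_zero, mul_zero, Real.exp_zero,
      Nat.choose_zero_right, Nat.cast_one, mul_one]
    have h1 : (0:ℝ) ≤ (M:ℝ) := Nat.cast_nonneg M
    linarith
  rcases hk.eq_or_lt with rfl | hkM
  · rw [div_self (by exact_mod_cast h0.ne' : (k:ℝ) ≠ 0), ent_one]
    simp only [mul_zero, Real.exp_zero, Nat.choose_self, Nat.cast_one, mul_one]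
    have : (0:ℝ) ≤ (k:ℝ) := by positivity
    linarith
  · have hq0 : (0:ℝ) < ((M-k:ℕ):ℝ)^(M-k) := by
      have : (0:ℝ) < ((M-k:ℕ):ℝ) := Nat.cast_pos.mpr (by omega)
      positivity
    have hk0 : (0:ℝ) < (k:ℝ)^k := by
      have : (0:ℝ) < (k:ℝ) := Nat.cast_pos.mpr h0
      positivity
    rw [exp_M_ent M k h0 hkM, div_le_iff₀ (by positivity)]
    have hc : ((M^M : ℕ) : ℝ) ≤ (((M+1) * (k^k * (M-k)^(M-k) * M.choose k) : ℕ) : ℝ) := Nat.cast_le.mpr (nat_low M k hk)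
    push_cast at hc
    calc (M:ℝ)^M ≤ ((M:ℝ)+1) * ((k:ℝ)^k * ((M-k:ℕ):ℝ)^(M-k) * (M.choose k:ℝ)) := hc
      _ = ((M:ℝ)+1) * (M.choose k:ℝ) * ((k:ℝ)^k * ((M-k:ℕ):ℝ)^(M-k)) := by ring



/-- spin magnetization values -/
noncomputable def mk (M k : ℕ) : ℝ := (2*(k:ℝ) - M)/M

/-- weight of magnetization class -/
noncomputable def w (β : ℝ) (M k : ℕ) : ℝ :=
  (M.choose k : ℝ) * Real.exp (β / (2*M) * (2*(k:ℝ) - M)^2)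

noncomputable def Zk (β : ℝ) (M : ℕ) : ℝ := ∑ k ∈ Finset.range (M+1), w β M k

lemma w_pos {β : ℝ} {M k : ℕ} (hk : k ≤ M) : 0 < w β M k := by
  apply mul_pos _ (Real.exp_pos _)
  exact_mod_cast Nat.choose_pos hk

lemma Zk_pos (β : ℝ) (M : ℕ) : 0 < Zk β M := by
  apply Finset.sum_pos
  · intro k hk
    exact w_pos (Nat.lt_succ_iff.mp (Finset.mem_range.mp hk))
  · exact ⟨0, Finset.mem_range.mpr (Nat.succ_pos M)⟩

lemma sum_chi {M : ℕ} (S : Finset (Fin M)) :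
    ∑ i : Fin M, (if i ∈ S then (1:ℝ) else -1) = 2*(S.card:ℝ) - M := by
  have h : ∀ i : Fin M, (if i ∈ S then (1:ℝ) else -1)
      = (if i ∈ S then (2:ℝ) else 0) - 1 := by
    intro i; split <;> norm_num
  rw [Finset.sum_congr rfl (fun i _ => h i), Finset.sum_sub_distrib]
  simp only [Finset.sum_const, Finset.card_univ, Fintype.card_fin, nsmul_eq_mul, mul_one]
  rw [Finset.sum_ite_mem, Finset.univ_inter, Finset.sum_const]
  simp only [nsmul_eq_mul]
  ring

lemma sum_config (M : ℕ) (F : ℝ → ℝ) :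
    ∑ x ∈ Fintype.piFinset (fun _ : Fin M => ({-1, 1} : Finset ℝ)), F (∑ i, x i)
      = ∑ k ∈ Finset.range (M+1), (M.choose k : ℕ) • F (2*(k:ℝ) - M) := by
  have hA : ∑ x ∈ Fintype.piFinset (fun _ : Fin M => ({-1, 1} : Finset ℝ)), F (∑ i, x i)
      = ∑ S ∈ (Finset.univ : Finset (Fin M)).powerset,
          F (∑ i : Fin M, (if i ∈ S then (1:ℝ) else -1)) := by
    apply Finset.sum_nbij'
      (i := fun x => Finset.univ.filter (fun i => x i = 1))
      (j := fun S => (fun i => if i ∈ S then (1:ℝ) else -1))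
    · intro x _
      exact Finset.mem_powerset.mpr (Finset.filter_subset _ _)
    · intro S _
      rw [Fintype.mem_piFinset]
      intro i
      simp only [Finset.mem_insert, Finset.mem_singleton]
      split <;> simp
    · intro x hx
      rw [Fintype.mem_piFinset] at hx
      funext i
      have := hx i
      simp only [Finset.mem_insert, Finset.mem_singleton] at this
      rcases this with h | h
      · simp only [Finset.mem_filter, Finset.mem_univ, true_and]
        rw [h]
        norm_num
      · simp only [Finset.mem_filter, Finset.mem_univ, true_and]
        rw [h]
        norm_num
    · intro S _
      ext i
      simp only [Finset.mem_filter, Finset.mem_univ, true_and]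
      split <;> simp_all <;> norm_num
    · intro x hx
      congr 1
      apply Finset.sum_congr rfl
      intro i _
      rw [Fintype.mem_piFinset] at hx
      have := hx i
      simp only [Finset.mem_insert, Finset.mem_singleton] at this
      simp only [Finset.mem_filter, Finset.mem_univ, true_and]
      rcases this with h | h
      · rw [h]; norm_num
      · rw [h]; norm_num
  rw [hA]
  have hB : ∀ S ∈ (Finset.univ : Finset (Fin M)).powerset,
      F (∑ i : Fin M, (if i ∈ S then (1:ℝ) else -1)) = F (2*(S.card:ℝ) - M) := by
    intro S _
    rw [sum_chi]
  rw [Finset.sum_congr rfl hB]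
  rw [Finset.sum_powerset_apply_card (fun c : ℕ => F (2*(c:ℝ) - M))]
  simp only [Finset.card_univ, Fintype.card_fin]

lemma integral_eq_sum (β : ℝ) (M : ℕ) (f : ℝ →ᵇ ℝ) (hZ : 0 < cwZ β M) :
    ∫ x, f ((M : ℝ)⁻¹ * ∑ i, x i) ∂(curieWeiss β M)
      = ∑ x ∈ Fintype.piFinset (fun _ : Fin M => ({-1, 1} : Finset ℝ)),
          (cwWeight β M x / cwZ β M) * f ((M : ℝ)⁻¹ * ∑ i, x i) := by
  rw [curieWeiss]
  have hmeas : Measurable (fun x : Fin M → ℝ => f ((M : ℝ)⁻¹ * ∑ i, x i)) := by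
    apply f.continuous.measurable.comp
    exact (measurable_const.mul (Finset.measurable_sum _ (fun i _ => measurable_pi_apply i)))
  rw [integral_finset_sum_measure ?_]
  · apply Finset.sum_congr rfl
    intro x _
    rw [integral_smul_measure, integral_dirac, ENNReal.toReal_ofReal
      (div_nonneg (Real.exp_pos _).le hZ.le : 0 ≤ cwWeight β M x / cwZ β M), smul_eq_mul]
  · intro x _
    apply Integrable.smul_measure
    · constructor
      · exact hmeas.aestronglyMeasurable
      · rw [hasFiniteIntegral_iff_norm]
        apply lt_of_le_of_lt (lintegral_mono (g := fun _ => (‖f‖₊ : ℝ≥0∞)) ?_)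
        · simp [lintegral_const]
        · intro y
          simp only [ENNReal.ofReal_le_iff_le_toReal (by simp : ((‖f‖₊:ℝ≥0∞) ≠ ⊤))]
          simpa using f.norm_coe_le_norm _
    · exact ENNReal.ofReal_ne_top

/-- The main reduction: the integral is a weighted average over magnetizations. -/
lemma integral_eq (β : ℝ) (M : ℕ) (hM : 1 ≤ M) (f : ℝ →ᵇ ℝ) :
    ∫ x, f ((M : ℝ)⁻¹ * ∑ i, x i) ∂(curieWeiss β M)
      = ∑ k ∈ Finset.range (M+1), (w β M k / Zk β M) * f (mk M k) := by
  have hZeq : cwZ β M = Zk β M := by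
    rw [cwZ, Zk]
    have h := sum_config M (fun y => Real.exp (β / (2*M) * y^2))
    simp only [cwWeight]
    rw [h]
    apply Finset.sum_congr rfl
    intro k _
    rw [w, nsmul_eq_mul]
  have hZ : 0 < cwZ β M := hZeq ▸ Zk_pos β M
  rw [integral_eq_sum β M f hZ]
  have key := sum_config M (fun y => (Real.exp (β / (2*M) * y^2) / cwZ β M) * f ((M:ℝ)⁻¹ * y))
  simp only [cwWeight]
  rw [key]
  apply Finset.sum_congr rfl
  intro k hk
  rw [nsmul_eq_mul, w, hZeq, mk]
  have : (M:ℝ)⁻¹ * (2*(k:ℝ) - M) = (2*(k:ℝ) - M)/M := by ring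
  rw [this]
  ring



lemma mk_half {M k : ℕ} (hM : 1 ≤ M) : (1 + mk M k)/2 = (k:ℝ)/M := by
  have hM0 : (M:ℝ) ≠ 0 := by positivity
  rw [mk]
  field_simp
  ring

lemma M_phi_split {β : ℝ} {M k : ℕ} (hM : 1 ≤ M) :
    (M:ℝ) * phi β (mk M k) = (M:ℝ) * ent ((k:ℝ)/M) + β / (2*M) * (2*(k:ℝ) - M)^2 := by
  have hM0 : (M:ℝ) ≠ 0 := by positivity
  rw [phi, mk_half hM, mk]
  field_simp
  ring

lemma w_le_exp (β : ℝ) (M k : ℕ) (hM : 1 ≤ M) (hk : k ≤ M) :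
    w β M k ≤ Real.exp ((M:ℝ) * phi β (mk M k)) := by
  rw [w, M_phi_split hM, Real.exp_add]
  exact mul_le_mul_of_nonneg_right (choose_le_exp M k hM hk) (Real.exp_pos _).le

lemma exp_le_w (β : ℝ) (M k : ℕ) (hM : 1 ≤ M) (hk : k ≤ M) :
    Real.exp ((M:ℝ) * phi β (mk M k)) ≤ ((M:ℝ)+1) * w β M k := by
  rw [w, M_phi_split hM, Real.exp_add, ← mul_assoc]
  exact mul_le_mul_of_nonneg_right (exp_le_choose M k hM hk) (Real.exp_pos _).le

lemma abs_mk_le {M k : ℕ} (hM : 1 ≤ M) (hk : k ≤ M) : |mk M k| ≤ 1 := by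
  have hM0 : (0:ℝ) < M := by positivity
  rw [mk, abs_div, abs_of_pos hM0, div_le_one hM0, abs_le]
  have : (k:ℝ) ≤ M := Nat.cast_le.mpr hk
  constructor <;> [skip; skip] <;> nlinarith [Nat.cast_nonneg (α := ℝ) k]

lemma mk_neg {M k : ℕ} (hk : k ≤ M) : mk M (M - k) = - mk M k := by
  rw [mk, mk, Nat.cast_sub hk]
  ring_nf

lemma w_symm (β : ℝ) {M k : ℕ} (hk : k ≤ M) : w β M (M - k) = w β M k := by
  rw [w, w, Nat.choose_symm hk, Nat.cast_sub hk,
    show (2*((M:ℝ) - (k:ℝ)) - M)^2 = (2*(k:ℝ) - M)^2 by ring]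

lemma tail_zero {δ : ℝ} (hδ : δ < 0) :
    Tendsto (fun M : ℕ => ((M:ℝ)+1)^2 * Real.exp ((M:ℝ) * δ)) atTop (nhds 0) := by
  have h1 : Tendsto (fun y : ℝ => y^2 * Real.exp (-y)) atTop (nhds 0) :=
    tendsto_pow_mul_exp_neg_atTop_nhds_zero 2
  have haff : Tendsto (fun M : ℕ => -δ*((M:ℝ)+1)) atTop atTop := by
    apply Tendsto.const_mul_atTop (by linarith : (0:ℝ) < -δ)
    exact tendsto_atTop_add_const_right _ 1 tendsto_natCast_atTop_atTop
  have h2 := (h1.comp haff).mul_const (Real.exp (-δ) / δ^2)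
  rw [zero_mul] at h2
  apply h2.congr
  intro M
  simp only [Function.comp_apply]
  have h3 : Real.exp δ * Real.exp (-δ) = 1 := by rw [← Real.exp_add]; simp
  have hδ2 : δ^2 ≠ 0 := pow_ne_zero 2 (ne_of_lt hδ)
  rw [show -(-δ*((M:ℝ)+1)) = (M:ℝ)*δ + δ by ring, Real.exp_add,
    show (-δ*((M:ℝ)+1))^2 = δ^2 * ((M:ℝ)+1)^2 by ring]
  field_simp
  rw [mul_assoc, h3, mul_one, div_self (by linarith : δ ≠ 0)]

lemma concentration (β : ℝ) (wloc c : ℝ) (hw0 : 0 ≤ wloc) (hw1 : wloc < 1)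
    (hc : c < phi β wloc) (S : ℕ → Finset ℕ) (hS : ∀ M, S M ⊆ Finset.range (M+1))
    (hb : ∀ M, 1 ≤ M → ∀ k ∈ S M, phi β (mk M k) ≤ c) :
    Tendsto (fun M => (∑ k ∈ S M, w β M k) / Zk β M) atTop (nhds 0) := by
  set t : ℝ := (1 + wloc)/2 with ht
  have ht0 : 0 ≤ t := by rw [ht]; linarith
  have ht1 : t ≤ 1 := by rw [ht]; linarith
  set kg : ℕ → ℕ := fun M => ⌊t * M⌋₊ with hkg
  have hkgM : ∀ M : ℕ, kg M ≤ M := by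
    intro M
    rw [hkg]
    calc ⌊t * M⌋₊ ≤ ⌊(M:ℝ)⌋₊ := Nat.floor_le_floor (by nlinarith [Nat.cast_nonneg (α := ℝ) M])
      _ = M := Nat.floor_natCast M
  have hconv : Tendsto (fun M : ℕ => mk M (kg M)) atTop (nhds wloc) := by
    apply tendsto_of_tendsto_of_tendsto_of_le_of_le'
      (g := fun M : ℕ => wloc - 2/(M:ℝ)) (h := fun _ : ℕ => wloc)
    · have : Tendsto (fun M : ℕ => 2/(M:ℝ)) atTop (nhds 0) :=
        tendsto_const_div_atTop_nhds_zero_nat 2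
      simpa using tendsto_const_nhds.sub this
    · exact tendsto_const_nhds
    · filter_upwards [eventually_ge_atTop 1] with M hM
      have hM0 : (0:ℝ) < M := by exact_mod_cast hM
      rw [mk, le_div_iff₀ hM0]
      have h2 : t * M - 1 < (kg M : ℝ) := by rw [hkg]; exact_mod_cast Nat.sub_one_lt_floor (t * M)
      rw [ht] at h2
      have hdiv : (2/(M:ℝ))*M = 2 := by field_simp
      nlinarith [hdiv, h2, hM0]
    · filter_upwards [eventually_ge_atTop 1] with M hM
      have hM0 : (0:ℝ) < M := by exact_mod_cast hM
      rw [mk, div_le_iff₀ hM0]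
      have h2 : (kg M : ℝ) ≤ t * M := by
        rw [hkg]; exact Nat.floor_le (by positivity)
      rw [ht] at h2
      nlinarith [h2, hM0]
  have hphi : Tendsto (fun M : ℕ => phi β (mk M (kg M))) atTop (nhds (phi β wloc)) :=
    ((continuous_phi β).continuousAt).tendsto.comp hconv
  set c' : ℝ := (c + phi β wloc)/2 with hc'
  have hcc' : c < c' := by rw [hc']; linarith
  have hev : ∀ᶠ M : ℕ in atTop, c' ≤ phi β (mk M (kg M)) :=
    hphi.eventually (eventually_ge_nhds (by rw [hc']; linarith))
  apply tendsto_of_tendsto_of_tendsto_of_le_of_le'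
    (g := fun _ : ℕ => (0:ℝ))
    (h := fun M : ℕ => ((M:ℝ)+1)^2 * Real.exp ((M:ℝ) * (c - c')))
    tendsto_const_nhds (tail_zero (by linarith))
  · apply Eventually.of_forall
    intro M
    apply div_nonneg _ (Zk_pos β M).le
    apply Finset.sum_nonneg
    intro k hk
    exact (w_pos (by simpa using Nat.lt_succ_iff.mp (Finset.mem_range.mp (hS M hk)))).le
  · filter_upwards [eventually_ge_atTop 1, hev] with M hM hevM
    have hM0 : (0:ℝ) < M := by exact_mod_cast hM
    have hnum : ∑ k ∈ S M, w β M k ≤ ((M:ℝ)+1) * Real.exp ((M:ℝ)*c) := by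
      calc ∑ k ∈ S M, w β M k ≤ ∑ _k ∈ S M, Real.exp ((M:ℝ)*c) := by
            apply Finset.sum_le_sum
            intro k hk
            have hkM : k ≤ M := Nat.lt_succ_iff.mp (Finset.mem_range.mp (hS M hk))
            calc w β M k ≤ Real.exp ((M:ℝ) * phi β (mk M k)) := w_le_exp β M k hM hkM
              _ ≤ Real.exp ((M:ℝ)*c) := by
                  apply Real.exp_le_exp.mpr
                  exact mul_le_mul_of_nonneg_left (hb M hM k hk) hM0.le
        _ = (S M).card * Real.exp ((M:ℝ)*c) := by rw [Finset.sum_const, nsmul_eq_mul]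
        _ ≤ ((M:ℝ)+1) * Real.exp ((M:ℝ)*c) := by
            apply mul_le_mul_of_nonneg_right _ (Real.exp_pos _).le
            have := Finset.card_le_card (hS M)
            rw [Finset.card_range] at this
            exact_mod_cast this
    have hden : Real.exp ((M:ℝ)*c') / ((M:ℝ)+1) ≤ Zk β M := by
      have h1 : Real.exp ((M:ℝ)*c') ≤ Real.exp ((M:ℝ) * phi β (mk M (kg M))) :=
        Real.exp_le_exp.mpr (mul_le_mul_of_nonneg_left hevM hM0.le)
      have h2 := exp_le_w β M (kg M) hM (hkgM M)
      have h3 : w β M (kg M) ≤ Zk β M := by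
        rw [Zk]
        apply Finset.single_le_sum (f := fun k => w β M k)
          (fun k hk => (w_pos (Nat.lt_succ_iff.mp (Finset.mem_range.mp hk))).le)
        exact Finset.mem_range.mpr (Nat.lt_succ_iff.mpr (hkgM M))
      rw [div_le_iff₀ (by positivity)]
      calc Real.exp ((M:ℝ)*c') ≤ ((M:ℝ)+1) * w β M (kg M) := le_trans h1 h2
        _ ≤ ((M:ℝ)+1) * Zk β M := by
            apply mul_le_mul_of_nonneg_left h3 (by positivity)
        _ = Zk β M * ((M:ℝ)+1) := by ring
    calc (∑ k ∈ S M, w β M k) / Zk β M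
        ≤ (((M:ℝ)+1) * Real.exp ((M:ℝ)*c)) / (Real.exp ((M:ℝ)*c') / ((M:ℝ)+1)) := by
          apply div_le_div₀ (by positivity) hnum (by positivity) hden
      _ = ((M:ℝ)+1)^2 * Real.exp ((M:ℝ) * (c - c')) := by
          rw [div_div_eq_mul_div, mul_sub, Real.exp_sub]
          ring



lemma sum_ratio_one (β : ℝ) (M : ℕ) :
    ∑ k ∈ Finset.range (M+1), w β M k / Zk β M = 1 := by
  rw [← Finset.sum_div, ← Zk, div_self (Zk_pos β M).ne']

lemma ratio_nonneg (β : ℝ) {M k : ℕ} (hk : k ∈ Finset.range (M+1)) :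
    0 ≤ w β M k / Zk β M :=
  div_nonneg (w_pos (Nat.lt_succ_iff.mp (Finset.mem_range.mp hk))).le (Zk_pos β M).le

lemma filter_ratio_le_one (β : ℝ) (M : ℕ) (p : ℕ → Prop) [DecidablePred p] :
    ∑ k ∈ (Finset.range (M+1)).filter p, w β M k / Zk β M ≤ 1 := by
  rw [← sum_ratio_one β M]
  exact Finset.sum_le_sum_of_subset_of_nonneg (Finset.filter_subset _ _)
    (fun k hk _ => ratio_nonneg β hk)

/-- Convergence of the weighted averages for β ≤ 1. -/
lemma avg_tendsto_le_one {β : ℝ} (hβ0 : 0 ≤ β) (hβ : β ≤ 1) (f : ℝ →ᵇ ℝ) :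
    Tendsto (fun M : ℕ => ∑ k ∈ Finset.range (M+1), (w β M k / Zk β M) * f (mk M k))
      atTop (nhds (f 0)) := by
  classical
  rw [Metric.tendsto_atTop]
  intro η hη
  -- continuity of f at 0
  obtain ⟨εf, hεf0, hεf⟩ := Metric.continuous_iff.mp f.continuous 0 (η/3) (by linarith)
  set ε : ℝ := min εf 1 with hε
  have hε0 : 0 < ε := lt_min hεf0 one_pos
  have hε1 : ε ≤ 1 := min_le_right _ _
  -- bad set
  set S : ℕ → Finset ℕ := fun M => (Finset.range (M+1)).filter (fun k => ε ≤ |mk M k|)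
    with hSdef
  have hS : ∀ M, S M ⊆ Finset.range (M+1) := fun M => Finset.filter_subset _ _
  have hb : ∀ M, 1 ≤ M → ∀ k ∈ S M, phi β (mk M k) ≤ phi β ε := by
    intro M hM k hk
    rw [hSdef, Finset.mem_filter] at hk
    obtain ⟨hkr, hεk⟩ := hk
    have hkM : k ≤ M := Nat.lt_succ_iff.mp (Finset.mem_range.mp hkr)
    have htle := abs_mk_le hM hkM
    have hphit : phi β (mk M k) = phi β |mk M k| := by
      rcases abs_cases (mk M k) with ⟨h1, _⟩ | ⟨h1, _⟩
      · rw [h1]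
      · rw [h1, phi_even]
    rw [hphit]
    exact (phi_strictAntiOn_le_one hβ).antitoneOn
      ⟨hε0.le, hε1⟩ ⟨abs_nonneg _, htle⟩ hεk
  have hconc := concentration β 0 (phi β ε) le_rfl one_pos
    ((phi_strictAntiOn_le_one hβ) ⟨le_rfl, zero_le_one⟩ ⟨hε0.le, hε1⟩ hε0)
    S hS hb
  rw [Metric.tendsto_atTop] at hconc
  obtain ⟨N0, hN0⟩ := hconc (η/(3*(2*‖f‖+1))) (by positivity)
  refine ⟨max N0 1, fun M hM => ?_⟩
  have hM1 : 1 ≤ M := le_trans (le_max_right _ _) hM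
  have hMN0 : N0 ≤ M := le_trans (le_max_left _ _) hM
  have hR := hN0 M hMN0
  rw [Real.dist_eq, sub_zero] at hR
  have hRnn : 0 ≤ (∑ k ∈ S M, w β M k) / Zk β M := by
    apply div_nonneg _ (Zk_pos β M).le
    exact Finset.sum_nonneg fun k hk =>
      (w_pos (Nat.lt_succ_iff.mp (Finset.mem_range.mp (hS M hk)))).le
  rw [abs_of_nonneg hRnn] at hR
  -- main bound
  rw [Real.dist_eq]
  have hdiff : ∑ k ∈ Finset.range (M+1), (w β M k / Zk β M) * f (mk M k) - f 0
      = ∑ k ∈ Finset.range (M+1), (w β M k / Zk β M) * (f (mk M k) - f 0) := by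
    rw [Finset.sum_congr rfl (fun k _ => mul_sub (w β M k / Zk β M) (f (mk M k)) (f 0)),
      Finset.sum_sub_distrib, ← Finset.sum_mul, sum_ratio_one β M, one_mul]
  rw [hdiff]
  have habs : |∑ k ∈ Finset.range (M+1), (w β M k / Zk β M) * (f (mk M k) - f 0)|
      ≤ ∑ k ∈ Finset.range (M+1), (w β M k / Zk β M) * |f (mk M k) - f 0| := by
    apply le_trans (Finset.abs_sum_le_sum_abs _ _)
    apply Finset.sum_le_sum
    intro k hk
    rw [abs_mul, abs_of_nonneg (ratio_nonneg β hk)]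
  apply lt_of_le_of_lt habs
  rw [← Finset.sum_filter_add_sum_filter_not (Finset.range (M+1)) (fun k => ε ≤ |mk M k|)]
  have hbad : ∑ k ∈ S M, (w β M k / Zk β M) * |f (mk M k) - f 0| ≤ η/3 := by
    have h1 : ∀ k ∈ S M, (w β M k / Zk β M) * |f (mk M k) - f 0|
        ≤ (w β M k / Zk β M) * (2*‖f‖) := by
      intro k hk
      apply mul_le_mul_of_nonneg_left _ (ratio_nonneg β (hS M hk))
      calc |f (mk M k) - f 0| ≤ |f (mk M k)| + |f 0| := abs_sub _ _
        _ ≤ ‖f‖ + ‖f‖ := add_le_add (f.norm_coe_le_norm _) (f.norm_coe_le_norm _)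
        _ = 2*‖f‖ := by ring
    calc ∑ k ∈ S M, (w β M k / Zk β M) * |f (mk M k) - f 0|
        ≤ ∑ k ∈ S M, (w β M k / Zk β M) * (2*‖f‖) := Finset.sum_le_sum h1
      _ = ((∑ k ∈ S M, w β M k) / Zk β M) * (2*‖f‖) := by
          rw [← Finset.sum_mul, Finset.sum_div]
      _ ≤ (η/(3*(2*‖f‖+1))) * (2*‖f‖) := by
          apply mul_le_mul_of_nonneg_right hR.le (by positivity)
      _ ≤ η/3 := by
          rw [div_mul_eq_mul_div, div_le_div_iff₀ (by positivity) (by norm_num)]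
          nlinarith [norm_nonneg f, hη]
  have hgood : ∑ k ∈ (Finset.range (M+1)).filter (fun k => ¬ (ε ≤ |mk M k|)),
      (w β M k / Zk β M) * |f (mk M k) - f 0| ≤ η/3 := by
    have h1 : ∀ k ∈ (Finset.range (M+1)).filter (fun k => ¬ (ε ≤ |mk M k|)),
        (w β M k / Zk β M) * |f (mk M k) - f 0| ≤ (w β M k / Zk β M) * (η/3) := by
      intro k hk
      rw [Finset.mem_filter] at hk
      apply mul_le_mul_of_nonneg_left _ (ratio_nonneg β hk.1)
      have : |mk M k| < ε := not_le.mp hk.2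
      have hd := hεf (mk M k) (by rw [Real.dist_eq, sub_zero]; exact lt_of_lt_of_le this (min_le_left _ _))
      rw [Real.dist_eq] at hd
      exact hd.le
    calc ∑ k ∈ (Finset.range (M+1)).filter (fun k => ¬ (ε ≤ |mk M k|)),
        (w β M k / Zk β M) * |f (mk M k) - f 0|
        ≤ ∑ k ∈ (Finset.range (M+1)).filter (fun k => ¬ (ε ≤ |mk M k|)),
          (w β M k / Zk β M) * (η/3) := Finset.sum_le_sum h1
      _ = (∑ k ∈ (Finset.range (M+1)).filter (fun k => ¬ (ε ≤ |mk M k|)),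
          (w β M k / Zk β M)) * (η/3) := by rw [← Finset.sum_mul]
      _ ≤ 1 * (η/3) := by
          apply mul_le_mul_of_nonneg_right (filter_ratio_le_one β M _) (by linarith)
      _ = η/3 := one_mul _
  calc (∑ k ∈ S M, (w β M k / Zk β M) * |f (mk M k) - f 0|) +
      ∑ k ∈ (Finset.range (M+1)).filter (fun k => ¬ (ε ≤ |mk M k|)),
        (w β M k / Zk β M) * |f (mk M k) - f 0| ≤ η/3 + η/3 := add_le_add hbad hgood
    _ < η := by linarith



set_option maxHeartbeats 2000000 in
/-- Convergence of the weighted averages for β > 1. -/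
lemma avg_tendsto_gt_one {β : ℝ} (hβ : 1 < β) {m : ℝ} (hm0 : 0 < m) (hm1 : m < 1)
    (hfix : L m = β * m) (f : ℝ →ᵇ ℝ) :
    Tendsto (fun M : ℕ => ∑ k ∈ Finset.range (M+1), (w β M k / Zk β M) * f (mk M k))
      atTop (nhds ((f (-m) + f m) / 2)) := by
  classical
  rw [Metric.tendsto_atTop]
  intro η hη
  obtain ⟨ε1, hε10, hε1⟩ := Metric.continuous_iff.mp f.continuous m (η/6) (by linarith)
  obtain ⟨ε2, hε20, hε2⟩ := Metric.continuous_iff.mp f.continuous (-m) (η/6) (by linarith)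
  set ε : ℝ := min (min ε1 ε2) (min (m/2) ((1-m)/2)) with hε
  have hε0 : 0 < ε := by
    apply lt_min (lt_min hε10 hε20) (lt_min (by linarith) (by linarith))
  have hεm : ε ≤ m/2 := le_trans (min_le_right _ _) (min_le_left _ _)
  have hεm1 : ε ≤ (1-m)/2 := le_trans (min_le_right _ _) (min_le_right _ _)
  have hεε1 : ε ≤ ε1 := le_trans (min_le_left _ _) (min_le_left _ _)
  have hεε2 : ε ≤ ε2 := le_trans (min_le_left _ _) (min_le_right _ _)
  -- the three sets
  set P : ℕ → ℕ → Prop := fun M k => |mk M k - m| < ε with hP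
  set Q : ℕ → ℕ → Prop := fun M k => |mk M k + m| < ε with hQ
  have hdisj : ∀ M k, Q M k → ¬ P M k := by
    intro M k hq hp
    rw [hQ] at hq; rw [hP] at hp
    have h2m : |2*m| ≤ |mk M k + m| + |mk M k - m| := by
      calc |2*m| = |(mk M k + m) - (mk M k - m)| := by ring_nf
        _ ≤ |mk M k + m| + |mk M k - m| := abs_sub _ _
    rw [abs_of_pos (by linarith : (0:ℝ) < 2*m)] at h2m
    linarith
  set S0 : ℕ → Finset ℕ := fun M =>
    (Finset.range (M+1)).filter (fun k => ¬ P M k ∧ ¬ Q M k) with hS0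
  -- concentration for S0
  have hc : max (phi β (m-ε)) (phi β (m+ε)) < phi β m := by
    apply max_lt
    · exact phi_strictMonoOn_below hβ hm0 hm1 hfix
        ⟨by linarith, by linarith⟩ ⟨hm0.le, le_rfl⟩ (by linarith)
    · exact phi_strictAntiOn_above hβ hm0 hm1 hfix
        ⟨le_rfl, hm1.le⟩ ⟨by linarith, by linarith⟩ (by linarith)
  have hb : ∀ M, 1 ≤ M → ∀ k ∈ S0 M,
      phi β (mk M k) ≤ max (phi β (m-ε)) (phi β (m+ε)) := by
    intro M hM k hk
    rw [hS0, Finset.mem_filter] at hk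
    obtain ⟨hkr, hnp, hnq⟩ := hk
    have hkM : k ≤ M := Nat.lt_succ_iff.mp (Finset.mem_range.mp hkr)
    have htle := abs_mk_le hM hkM
    set t : ℝ := |mk M k| with htdef
    have hphit : phi β (mk M k) = phi β t := by
      rcases abs_cases (mk M k) with ⟨h1, _⟩ | ⟨h1, _⟩
      · rw [htdef, h1]
      · rw [htdef, h1, phi_even]
    have htm : ε ≤ |t - m| := by
      rcases abs_cases (mk M k) with ⟨h1, _⟩ | ⟨h1, _⟩
      · rw [htdef, h1]
        exact not_lt.mp (by rw [hP] at hnp; exact hnp)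
      · rw [htdef, h1, show -mk M k - m = -(mk M k + m) by ring, abs_neg]
        exact not_lt.mp (by rw [hQ] at hnq; exact hnq)
    rw [hphit]
    rcases le_abs.mp htm with h | h
    · -- m + ε ≤ t
      apply le_trans _ (le_max_right _ _)
      exact (phi_strictAntiOn_above hβ hm0 hm1 hfix).antitoneOn
        ⟨by linarith, by linarith⟩ ⟨by linarith, htle⟩ (by linarith)
    · -- t ≤ m - ε
      apply le_trans _ (le_max_left _ _)
      exact (phi_strictMonoOn_below hβ hm0 hm1 hfix).monotoneOn
        ⟨abs_nonneg _, by linarith⟩ ⟨by linarith, by linarith⟩ (by linarith)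
  have hconc := concentration β m (max (phi β (m-ε)) (phi β (m+ε))) hm0.le hm1 hc
    S0 (fun M => Finset.filter_subset _ _) hb
  rw [Metric.tendsto_atTop] at hconc
  obtain ⟨N0, hN0⟩ := hconc (η/(3*(2*‖f‖+1))) (by positivity)
  refine ⟨max N0 1, fun M hM => ?_⟩
  have hM1 : 1 ≤ M := le_trans (le_max_right _ _) hM
  have hMN0 : N0 ≤ M := le_trans (le_max_left _ _) hM
  have hR := hN0 M hMN0
  rw [Real.dist_eq, sub_zero] at hR
  -- notation for the three partial sums of ratios and values
  set T : Finset ℕ := Finset.range (M+1) with hT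
  set r : ℕ → ℝ := fun k => w β M k / Zk β M with hr
  have hrnn : ∀ k ∈ T, 0 ≤ r k := fun k hk => ratio_nonneg β hk
  set Pp : ℝ := ∑ k ∈ T.filter (fun k => P M k), r k with hPp
  set Pm : ℝ := ∑ k ∈ T.filter (fun k => Q M k), r k with hPm
  set P0 : ℝ := ∑ k ∈ S0 M, r k with hP0
  have hP0R : P0 < η/(3*(2*‖f‖+1)) := by
    rw [hP0]
    have : (∑ k ∈ S0 M, w β M k) / Zk β M = ∑ k ∈ S0 M, r k := by
      rw [Finset.sum_div]
    rw [← this]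
    calc (∑ k ∈ S0 M, w β M k) / Zk β M ≤ |(∑ k ∈ S0 M, w β M k) / Zk β M| := le_abs_self _
      _ < _ := hR
  have hP0nn : 0 ≤ P0 := Finset.sum_nonneg (fun k hk =>
    hrnn k (Finset.filter_subset _ _ hk))
  -- partition
  have hsplit : ∀ g : ℕ → ℝ, ∑ k ∈ T, g k
      = ∑ k ∈ T.filter (fun k => P M k), g k
        + ∑ k ∈ T.filter (fun k => Q M k), g k + ∑ k ∈ S0 M, g k := by
    intro g
    have h1 := Finset.sum_filter_add_sum_filter_not T (fun k => P M k) g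
    have h2 := Finset.sum_filter_add_sum_filter_not (T.filter (fun k => ¬ P M k))
      (fun k => Q M k) g
    have h3 : (T.filter (fun k => ¬ P M k)).filter (fun k => Q M k)
        = T.filter (fun k => Q M k) := by
      rw [Finset.filter_filter]
      apply Finset.filter_congr
      intro k _
      simp only [iff_def]
      constructor
      · exact fun h => h.2
      · exact fun h => ⟨hdisj M k h, h⟩
    have h4 : (T.filter (fun k => ¬ P M k)).filter (fun k => ¬ Q M k) = S0 M := by
      rw [hS0, Finset.filter_filter, hT]
    rw [h3, h4] at h2
    linarith
  -- symmetry : Pp = Pm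
  have hsym : Pp = Pm := by
    rw [hPp, hPm]
    apply Finset.sum_nbij' (i := fun k => M - k) (j := fun k => M - k)
    · intro k hk
      rw [Finset.mem_filter] at hk ⊢
      have hkM : k ≤ M := Nat.lt_succ_iff.mp (Finset.mem_range.mp hk.1)
      constructor
      · exact Finset.mem_range.mpr (Nat.lt_succ_iff.mpr (Nat.sub_le M k))
      · simp only [hQ]
        rw [mk_neg hkM]
        simp only [hP] at hk
        rw [show -mk M k + m = -(mk M k - m) by ring, abs_neg]
        exact hk.2
    · intro k hk
      rw [Finset.mem_filter] at hk ⊢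
      have hkM : k ≤ M := Nat.lt_succ_iff.mp (Finset.mem_range.mp hk.1)
      constructor
      · exact Finset.mem_range.mpr (Nat.lt_succ_iff.mpr (Nat.sub_le M k))
      · simp only [hP]
        rw [mk_neg hkM]
        simp only [hQ] at hk
        rw [show -mk M k - m = -(mk M k + m) by ring, abs_neg]
        exact hk.2
    · intro k hk
      rw [Finset.mem_filter] at hk
      have hkM : k ≤ M := Nat.lt_succ_iff.mp (Finset.mem_range.mp hk.1)
      omega
    · intro k hk
      rw [Finset.mem_filter] at hk
      have hkM : k ≤ M := Nat.lt_succ_iff.mp (Finset.mem_range.mp hk.1)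
      omega
    · intro k hk
      rw [Finset.mem_filter] at hk
      have hkM : k ≤ M := Nat.lt_succ_iff.mp (Finset.mem_range.mp hk.1)
      rw [hr]
      dsimp only
      rw [w_symm β hkM]
  -- total mass
  have htot : Pp + Pm + P0 = 1 := by
    rw [hPp, hPm, hP0, ← hsplit (fun k => r k)]
    have := sum_ratio_one β M
    rw [hT]
    exact this
  have hPp_half : Pp - 1/2 = -(P0/2) := by
    rw [hsym] at htot ⊢
    linarith
  have hPpnn : 0 ≤ Pp := Finset.sum_nonneg (fun k hk =>
    hrnn k (Finset.filter_subset _ _ hk))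
  have hPple : Pp ≤ 1 := by
    rw [hPp, hr]
    exact filter_ratio_le_one β M _
  have hPmle : Pm ≤ 1 := by rw [← hsym]; exact hPple
  -- decompose the average
  have hdecomp : ∑ k ∈ T, r k * f (mk M k) - (f (-m) + f m)/2
      = (∑ k ∈ T.filter (fun k => P M k), r k * (f (mk M k) - f m))
        + (∑ k ∈ T.filter (fun k => Q M k), r k * (f (mk M k) - f (-m)))
        + (∑ k ∈ S0 M, r k * f (mk M k))
        + (Pp - 1/2) * f m + (Pm - 1/2) * f (-m) := by
    rw [hsplit (fun k => r k * f (mk M k))]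
    have e1 : ∑ k ∈ T.filter (fun k => P M k), r k * (f (mk M k) - f m)
        = (∑ k ∈ T.filter (fun k => P M k), r k * f (mk M k)) - Pp * f m := by
      rw [hPp, Finset.sum_mul, ← Finset.sum_sub_distrib]
      apply Finset.sum_congr rfl
      intro k _
      ring
    have e2 : ∑ k ∈ T.filter (fun k => Q M k), r k * (f (mk M k) - f (-m))
        = (∑ k ∈ T.filter (fun k => Q M k), r k * f (mk M k)) - Pm * f (-m) := by
      rw [hPm, Finset.sum_mul, ← Finset.sum_sub_distrib]
      apply Finset.sum_congr rfl
      intro k _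
      ring
    rw [e1, e2]
    ring
  rw [Real.dist_eq, hdecomp]
  -- bound each piece
  have hb1 : |∑ k ∈ T.filter (fun k => P M k), r k * (f (mk M k) - f m)| ≤ η/6 := by
    apply le_trans (Finset.abs_sum_le_sum_abs _ _)
    calc ∑ k ∈ T.filter (fun k => P M k), |r k * (f (mk M k) - f m)|
        ≤ ∑ k ∈ T.filter (fun k => P M k), r k * (η/6) := by
          apply Finset.sum_le_sum
          intro k hk
          rw [Finset.mem_filter] at hk
          rw [abs_mul, abs_of_nonneg (hrnn k hk.1)]
          apply mul_le_mul_of_nonneg_left _ (hrnn k hk.1)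
          have : dist (mk M k) m < ε1 := by
            rw [Real.dist_eq]
            rw [hP] at hk
            exact lt_of_lt_of_le hk.2 hεε1
          have := hε1 (mk M k) this
          rw [Real.dist_eq] at this
          exact this.le
      _ = Pp * (η/6) := by rw [hPp, Finset.sum_mul]
      _ ≤ 1 * (η/6) := mul_le_mul_of_nonneg_right hPple (by linarith)
      _ = η/6 := one_mul _
  have hb2 : |∑ k ∈ T.filter (fun k => Q M k), r k * (f (mk M k) - f (-m))| ≤ η/6 := by
    apply le_trans (Finset.abs_sum_le_sum_abs _ _)
    calc ∑ k ∈ T.filter (fun k => Q M k), |r k * (f (mk M k) - f (-m))|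
        ≤ ∑ k ∈ T.filter (fun k => Q M k), r k * (η/6) := by
          apply Finset.sum_le_sum
          intro k hk
          rw [Finset.mem_filter] at hk
          rw [abs_mul, abs_of_nonneg (hrnn k hk.1)]
          apply mul_le_mul_of_nonneg_left _ (hrnn k hk.1)
          have : dist (mk M k) (-m) < ε2 := by
            rw [Real.dist_eq, show mk M k - -m = mk M k + m by ring]
            rw [hQ] at hk
            exact lt_of_lt_of_le hk.2 hεε2
          have := hε2 (mk M k) this
          rw [Real.dist_eq] at this
          exact this.le
      _ = Pm * (η/6) := by rw [hPm, Finset.sum_mul]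
      _ ≤ 1 * (η/6) := mul_le_mul_of_nonneg_right hPmle (by linarith)
      _ = η/6 := one_mul _
  have hb3 : |∑ k ∈ S0 M, r k * f (mk M k)| ≤ ‖f‖ * P0 := by
    apply le_trans (Finset.abs_sum_le_sum_abs _ _)
    calc ∑ k ∈ S0 M, |r k * f (mk M k)|
        ≤ ∑ k ∈ S0 M, r k * ‖f‖ := by
          apply Finset.sum_le_sum
          intro k hk
          rw [abs_mul, abs_of_nonneg (hrnn k (Finset.filter_subset _ _ hk))]
          exact mul_le_mul_of_nonneg_left (f.norm_coe_le_norm _)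
            (hrnn k (Finset.filter_subset _ _ hk))
      _ = P0 * ‖f‖ := by rw [hP0, Finset.sum_mul]
      _ = ‖f‖ * P0 := mul_comm _ _
  have hb4 : |(Pp - 1/2) * f m| ≤ ‖f‖ * (P0/2) := by
    rw [abs_mul, hPp_half, abs_neg, abs_of_nonneg (by linarith : 0 ≤ P0/2), mul_comm (‖f‖)]
    apply mul_le_mul_of_nonneg_left _ (by linarith : 0 ≤ P0/2)
    rw [← Real.norm_eq_abs]
    exact f.norm_coe_le_norm m
  have hb5 : |(Pm - 1/2) * f (-m)| ≤ ‖f‖ * (P0/2) := by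
    rw [abs_mul, ← hsym, hPp_half, abs_neg, abs_of_nonneg (by linarith : 0 ≤ P0/2),
      mul_comm (‖f‖)]
    apply mul_le_mul_of_nonneg_left _ (by linarith : 0 ≤ P0/2)
    rw [← Real.norm_eq_abs]
    exact f.norm_coe_le_norm (-m)
  have hfP0 : 2*‖f‖ * P0 < η/3 := by
    have h1 : 2*‖f‖ * P0 ≤ (2*‖f‖+1) * P0 := by nlinarith
    have h2 : (2*‖f‖+1) * P0 < (2*‖f‖+1) * (η/(3*(2*‖f‖+1))) := by
      apply mul_lt_mul_of_pos_left hP0R (by positivity)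
    have h3 : (2*‖f‖+1) * (η/(3*(2*‖f‖+1))) = η/3 := by
      rw [← mul_div_assoc, show 3*(2*‖f‖+1) = (2*‖f‖+1)*3 by ring,
        mul_div_mul_left _ _ (by positivity : (0:ℝ) < 2*‖f‖+1).ne']
    linarith
  calc |∑ k ∈ T.filter (fun k => P M k), r k * (f (mk M k) - f m)
        + ∑ k ∈ T.filter (fun k => Q M k), r k * (f (mk M k) - f (-m))
        + ∑ k ∈ S0 M, r k * f (mk M k)
        + (Pp - 1/2) * f m + (Pm - 1/2) * f (-m)|
      ≤ η/6 + η/6 + ‖f‖ * P0 + ‖f‖ * (P0/2) + ‖f‖ * (P0/2) := by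
        apply le_trans (abs_add_le _ _)
        apply add_le_add _ hb5
        apply le_trans (abs_add_le _ _)
        apply add_le_add _ hb4
        apply le_trans (abs_add_le _ _)
        apply add_le_add _ hb3
        apply le_trans (abs_add_le _ _)
        exact add_le_add hb1 hb2
    _ = η/3 + 2*‖f‖*P0 := by ring
    _ < η/3 + η/3 := by linarith
    _ < η := by linarith


end CW

open CW in
/-- **Law of large numbers for Curie-Weiss variables.** If `ξ_1, …, ξ_M` are
`P_β^M`-distributed Curie-Weiss random variables, then the mean `(1/M) ∑ ξ_i` converges in
distribution, as `M → ∞`, to `δ_0` if `β ≤ 1` and to `(1/2)(δ_{−m(β)} + δ_{m(β)})` if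
`β > 1`, where `m(β)` is the unique strictly positive solution of `tanh(βm) = m`. -/
theorem curieWeiss_law_of_large_numbers (β : ℝ) (hβ : 0 ≤ β) :
    (1 < β → ∃! m : ℝ, 0 < m ∧ Real.tanh (β * m) = m) ∧
    (β ≤ 1 → ∀ f : ℝ →ᵇ ℝ,
      Tendsto (fun M : ℕ => ∫ x, f ((M : ℝ)⁻¹ * ∑ i, x i) ∂(curieWeiss β M))
        atTop (nhds (f 0))) ∧
    (1 < β → ∀ m : ℝ, 0 < m → Real.tanh (β * m) = m → ∀ f : ℝ →ᵇ ℝ,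
      Tendsto (fun M : ℕ => ∫ x, f ((M : ℝ)⁻¹ * ∑ i, x i) ∂(curieWeiss β M))
        atTop (nhds ((f (-m) + f m) / 2))) := by
  refine ⟨fun hβ1 => CW.part_one hβ1, fun hβ1 f => ?_, fun hβ1 m hm0 hmf f => ?_⟩
  · apply Filter.Tendsto.congr' _ (CW.avg_tendsto_le_one hβ hβ1 f)
    filter_upwards [Filter.eventually_ge_atTop 1] with M hM
    exact (CW.integral_eq β M hM f).symm
  · have hm : m ∈ Set.Ioo (-1:ℝ) 1 := hmf ▸ CW.tanh_mem_Ioo (β * m)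
    have hfix : CW.L m = β * m := ((CW.tanh_eq_iff hm.1 hm.2).mp hmf).symm
    apply Filter.Tendsto.congr' _ (CW.avg_tendsto_gt_one hβ1 hm0 hm.2 hfix f)
    filter_upwards [Filter.eventually_ge_atTop 1] with M hM
    exact (CW.integral_eq β M hM f).symm
end

section
/- De Finetti-type representation for Curie-Weiss measures (Hubbard–Stratonovich). Fix β > 0 and M ∈ ℕ. For t ∈ [−1,1] let P_t^{(M)} be the M-fold product of the measure on {−1,1} giving mass (1+t)/2 to +1 and (1−t)/2 to −1, with expectation E_t, and set F_β(t) = (1/β)((1/2)·ln((1+t)/(1−t)))² + ln(1−t²) and w(t) = e^{−(M/2)·F_β(t)}/(1−t²) for t ∈ (−1,1). Then for every function φ on {−1,1}^M, the Curie-Weiss expectation satisfies E_β^M[φ(X_1, …, X_M)] = (∫_{−1}^{1} E_t[φ(X_1, …, X_M)] · w(t) dt) / (∫_{−1}^{1} w(t) dt). -/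
open MeasureTheory ProbabilityTheory Filter
open scoped BoundedContinuousFunction ENNReal

section Aux

open Real Set

lemma my_hasDerivAt_tanh (x : ℝ) : HasDerivAt Real.tanh (Real.cosh x ^ 2)⁻¹ x := by
  have h : HasDerivAt (fun y => Real.sinh y / Real.cosh y)
      ((Real.cosh x * Real.cosh x - Real.sinh x * Real.sinh x) / Real.cosh x ^ 2) x :=
    (Real.hasDerivAt_sinh x).div (Real.hasDerivAt_cosh x) (Real.cosh_pos x).ne'
  have heq : Real.tanh = fun y => Real.sinh y / Real.cosh y := by
    funext y; exact Real.tanh_eq_sinh_div_cosh y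
  rw [heq]
  convert h using 1
  have := Real.cosh_sq_sub_sinh_sq x
  field_simp
  nlinarith [this]

lemma my_tanh_mem (s : ℝ) : Real.tanh s ∈ Set.Ioo (-1:ℝ) 1 := by
  have hc := Real.cosh_pos s
  rw [Real.tanh_eq_sinh_div_cosh]
  constructor
  · rw [lt_div_iff₀ hc]
    nlinarith [Real.exp_pos s, Real.cosh_add_sinh s]
  · rw [div_lt_one hc]
    nlinarith [Real.exp_pos (-s), Real.cosh_sub_sinh s]

lemma my_tanh_strictMono : StrictMono Real.tanh := by
  apply strictMono_of_deriv_pos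
  intro x
  rw [(my_hasDerivAt_tanh x).deriv]
  positivity

lemma my_tanh_surj {t : ℝ} (ht : t ∈ Set.Ioo (-1:ℝ) 1) :
    Real.tanh (1/2 * Real.log ((1+t)/(1-t))) = t := by
  obtain ⟨h1, h2⟩ := ht
  have h1' : (0:ℝ) < 1 + t := by linarith
  have h2' : (0:ℝ) < 1 - t := by linarith
  set u := 1/2 * Real.log ((1+t)/(1-t)) with hu
  have hE : Real.exp u ^ 2 = (1+t)/(1-t) := by
    rw [← Real.exp_nat_mul]
    push_cast
    rw [hu]
    rw [show (2:ℝ) * (1/2 * Real.log ((1+t)/(1-t))) = Real.log ((1+t)/(1-t)) by ring]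
    exact Real.exp_log (by positivity)
  have hEpos := Real.exp_pos u
  rw [Real.tanh_eq_sinh_div_cosh, Real.sinh_eq, Real.cosh_eq, Real.exp_neg]
  have hE' : Real.exp u ^ 2 * (1 - t) = 1 + t := by
    rw [hE]; field_simp
  rw [div_div_div_cancel_right₀, div_eq_iff (by positivity)]
  field_simp
  linear_combination hE'
  norm_num

lemma my_tanh_range : Real.tanh '' Set.univ = Set.Ioo (-1:ℝ) 1 := by
  rw [Set.image_univ]
  ext t
  constructor
  · rintro ⟨s, rfl⟩; exact my_tanh_mem s
  · intro ht; exact ⟨_, my_tanh_surj ht⟩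

lemma my_cov (g : ℝ → ℝ) :
    ∫ t in (-1:ℝ)..1, g t = ∫ s : ℝ, (Real.cosh s ^ 2)⁻¹ * g (Real.tanh s) := by
  rw [intervalIntegral.integral_of_le (by norm_num), integral_Ioc_eq_integral_Ioo,
    ← my_tanh_range,
    integral_image_eq_integral_abs_deriv_smul MeasurableSet.univ
      (fun x _ => (my_hasDerivAt_tanh x).hasDerivWithinAt)
      (my_tanh_strictMono.injective.injOn) g]
  rw [MeasureTheory.setIntegral_univ]
  congr 1
  funext s
  rw [abs_of_pos (by positivity), smul_eq_mul]

lemma my_gauss_integrable {a : ℝ} (ha : 0 < a) (b : ℝ) :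
    Integrable (fun s : ℝ => Real.exp (b * s - a * s ^ 2)) := by
  have h : (fun s : ℝ => Real.exp (b * s - a * s ^ 2))
      = fun s => Real.exp (-a * (s - b / (2 * a)) ^ 2) * Real.exp (b ^ 2 / (4 * a)) := by
    funext s
    rw [← Real.exp_add]
    congr 1
    field_simp
    ring
  rw [h]
  exact ((integrable_exp_neg_mul_sq ha).comp_sub_right (b / (2 * a))).mul_const _

lemma my_gauss_int {a : ℝ} (ha : 0 < a) (b : ℝ) :
    ∫ s : ℝ, Real.exp (b * s - a * s ^ 2) = Real.sqrt (π / a) * Real.exp (b ^ 2 / (4 * a)) := by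
  have h : (fun s : ℝ => Real.exp (b * s - a * s ^ 2))
      = fun s => Real.exp (-a * (s - b / (2 * a)) ^ 2) * Real.exp (b ^ 2 / (4 * a)) := by
    funext s
    rw [← Real.exp_add]
    congr 1
    field_simp
    ring
  rw [h, MeasureTheory.integral_mul_const,
    MeasureTheory.integral_sub_right_eq_self (fun s => Real.exp (-a * s ^ 2)) (b / (2*a)),
    integral_gaussian]

lemma my_one_sub_tanh_sq (s : ℝ) : 1 - Real.tanh s ^ 2 = (Real.cosh s ^ 2)⁻¹ := by
  have hc := Real.cosh_pos s
  rw [Real.tanh_eq_sinh_div_cosh, div_pow]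
  field_simp
  exact Real.cosh_sq_sub_sinh_sq s

lemma my_one_add_tanh (s : ℝ) : 1 + Real.tanh s = Real.exp s / Real.cosh s := by
  have hc := (Real.cosh_pos s).ne'
  rw [Real.tanh_eq_sinh_div_cosh, ← Real.cosh_add_sinh s]
  field_simp

lemma my_one_sub_tanh (s : ℝ) : 1 - Real.tanh s = Real.exp (-s) / Real.cosh s := by
  have hc := (Real.cosh_pos s).ne'
  rw [Real.tanh_eq_sinh_div_cosh, ← Real.cosh_sub_sinh s]
  field_simp

lemma my_log_ratio (s : ℝ) :
    Real.log ((1 + Real.tanh s) / (1 - Real.tanh s)) = 2 * s := by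
  rw [my_one_add_tanh, my_one_sub_tanh,
    div_div_div_cancel_right₀ (Real.cosh_pos s).ne', ← Real.exp_sub]
  rw [show s - -s = 2 * s by ring, Real.log_exp]

lemma my_wfact (β : ℝ) (hβ : 0 < β) (M : ℕ) (s : ℝ) :
    Real.exp (-((M:ℝ) / 2) *
        ((1 / β) * ((1 / 2) * Real.log ((1 + Real.tanh s) / (1 - Real.tanh s))) ^ 2 +
          Real.log (1 - Real.tanh s ^ 2))) / (1 - Real.tanh s ^ 2)
      = Real.exp (-((M:ℝ) / (2 * β)) * s ^ 2) * Real.cosh s ^ (M + 2) := by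
  have hc := Real.cosh_pos s
  rw [my_log_ratio, my_one_sub_tanh_sq, Real.log_inv, Real.log_pow]
  rw [show -((M:ℝ) / 2) * ((1 / β) * ((1/2) * (2*s))^2 + -((2:ℕ) * Real.log (Real.cosh s)))
      = -((M:ℝ) / (2*β)) * s^2 + (M : ℝ) * Real.log (Real.cosh s) by push_cast; field_simp; ring]
  rw [Real.exp_add, Real.exp_nat_mul, Real.exp_log hc]
  field_simp
  ring

lemma my_prodfact (M : ℕ) (x : Fin M → ℝ) (hx : ∀ i, x i = -1 ∨ x i = 1) (s : ℝ) :
    ∏ i, ((1 + Real.tanh s * x i) / 2)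
      = Real.exp (s * ∑ i, x i) / (2 * Real.cosh s) ^ M := by
  have hc := Real.cosh_pos s
  have h : ∀ i, (1 + Real.tanh s * x i) / 2 = Real.exp (s * x i) / (2 * Real.cosh s) := by
    intro i
    rcases hx i with h | h <;> rw [h]
    · rw [mul_neg_one, ← sub_eq_add_neg, my_one_sub_tanh,
        show s * (-1:ℝ) = -s by ring, div_div, mul_comm (Real.cosh s) 2]
    · rw [mul_one, mul_one, my_one_add_tanh, div_div, mul_comm (Real.cosh s) 2]
  rw [Finset.prod_congr rfl (fun i _ => h i), Finset.prod_div_distrib, ← Real.exp_sum,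
    Finset.prod_const, Finset.card_univ, Fintype.card_fin, Finset.mul_sum]

lemma my_keypt (β : ℝ) (hβ : 0 < β) (M : ℕ) (x : Fin M → ℝ)
    (hx : ∀ i, x i = -1 ∨ x i = 1) (s : ℝ) :
    (Real.cosh s ^ 2)⁻¹ * ((∏ i, ((1 + Real.tanh s * x i) / 2)) *
        (Real.exp (-((M:ℝ) / 2) *
            ((1 / β) * ((1 / 2) * Real.log ((1 + Real.tanh s) / (1 - Real.tanh s))) ^ 2 +
              Real.log (1 - Real.tanh s ^ 2))) / (1 - Real.tanh s ^ 2)))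
      = Real.exp ((∑ i, x i) * s - (M / (2 * β)) * s ^ 2) / 2 ^ M := by
  have hc := Real.cosh_pos s
  rw [my_prodfact M x hx s, my_wfact β hβ M s]
  have h1 : Real.exp ((∑ i, x i) * s - ((M:ℝ) / (2 * β)) * s ^ 2)
      = Real.exp (s * ∑ i, x i) * Real.exp (-((M:ℝ) / (2 * β)) * s ^ 2) := by
    rw [← Real.exp_add]; ring_nf
  rw [h1, mul_pow, pow_add]
  field_simp

lemma my_sum_prod_one (M : ℕ) (t : ℝ) :
    ∑ x ∈ Fintype.piFinset (fun _ : Fin M => ({-1, 1} : Finset ℝ)),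
      ∏ i, ((1 + t * x i) / 2) = 1 := by
  rw [← Finset.prod_univ_sum (fun _ : Fin M => ({-1, 1} : Finset ℝ)) (fun _ c => (1 + t * c) / 2)]
  have h : ∀ i : Fin M, ∑ c ∈ ({-1, 1} : Finset ℝ), (1 + t * c) / 2 = 1 := by
    intro i
    rw [Finset.sum_insert (by norm_num), Finset.sum_singleton]
    ring
  rw [Finset.prod_congr rfl (fun i _ => h i), Finset.prod_const_one]

lemma my_main (β : ℝ) (hβ : 0 < β) (M : ℕ) (hM : 0 < M) (ψ : (Fin M → ℝ) → ℝ) :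
    (∫ t in (-1 : ℝ)..1,
        (∑ x ∈ Fintype.piFinset (fun _ : Fin M => ({-1, 1} : Finset ℝ)),
          (∏ i, ((1 + t * x i) / 2)) * ψ x) *
        (Real.exp (-(M / 2) *
            ((1 / β) * ((1 / 2) * Real.log ((1 + t) / (1 - t))) ^ 2 +
              Real.log (1 - t ^ 2))) / (1 - t ^ 2)))
    = (Real.sqrt (π / ((M:ℝ) / (2 * β))) / 2 ^ M) *
        ∑ x ∈ Fintype.piFinset (fun _ : Fin M => ({-1, 1} : Finset ℝ)),
          cwWeight β M x * ψ x := by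
  have ha : 0 < (M:ℝ) / (2 * β) := by positivity
  rw [my_cov]
  have hpt : (fun s => (Real.cosh s ^ 2)⁻¹ *
      ((∑ x ∈ Fintype.piFinset (fun _ : Fin M => ({-1, 1} : Finset ℝ)),
          (∏ i, ((1 + Real.tanh s * x i) / 2)) * ψ x) *
        (Real.exp (-((M:ℝ) / 2) *
            ((1 / β) * ((1 / 2) * Real.log ((1 + Real.tanh s) / (1 - Real.tanh s))) ^ 2 +
              Real.log (1 - Real.tanh s ^ 2))) / (1 - Real.tanh s ^ 2))))
      = fun s => ∑ x ∈ Fintype.piFinset (fun _ : Fin M => ({-1, 1} : Finset ℝ)),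
          Real.exp ((∑ i, x i) * s - ((M:ℝ) / (2 * β)) * s ^ 2) / 2 ^ M * ψ x := by
    funext s
    rw [Finset.sum_mul, Finset.mul_sum]
    refine Finset.sum_congr rfl fun x hx => ?_
    have hx' : ∀ i, x i = -1 ∨ x i = 1 := by
      intro i
      have := Fintype.mem_piFinset.mp hx i
      simpa using this
    linear_combination (my_keypt β hβ M x hx' s) * ψ x
  rw [hpt]
  rw [MeasureTheory.integral_finset_sum _ (fun x hx => by
    exact (((my_gauss_integrable ha (∑ i, x i)).div_const _).mul_const _))]
  rw [Finset.mul_sum]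
  refine Finset.sum_congr rfl fun x hx => ?_
  rw [MeasureTheory.integral_mul_const, MeasureTheory.integral_div, my_gauss_int ha]
  rw [cwWeight]
  have : (∑ i, x i) ^ 2 / (4 * ((M:ℝ) / (2 * β))) = β / (2 * M) * (∑ i, x i) ^ 2 := by
    have hM' : (M:ℝ) ≠ 0 := Nat.cast_ne_zero.mpr hM.ne'
    field_simp
    ring
  rw [this]
  ring

end Aux

/-- **De Finetti-type representation for Curie-Weiss measures (Hubbard–Stratonovich).**
For `β > 0`, `M ≥ 1` and any `φ : {-1,1}^M → ℝ`, the Curie-Weiss expectation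
`E_β^M[φ]` equals `(∫_{-1}^1 E_t[φ] w(t) dt) / (∫_{-1}^1 w(t) dt)`, where `E_t` is the
expectation of the `M`-fold product of the measure on `{-1,1}` giving mass `(1±t)/2` to
`±1`, `w(t) = exp(−(M/2) F_β(t))/(1−t²)` and
`F_β(t) = (1/β)((1/2) ln((1+t)/(1-t)))² + ln(1−t²)`. -/
theorem curieWeiss_deFinetti_representation (β : ℝ) (hβ : 0 < β) (M : ℕ) (hM : 0 < M)
    (φ : (Fin M → ℝ) → ℝ) :
    (∑ x ∈ Fintype.piFinset (fun _ : Fin M => ({-1, 1} : Finset ℝ)),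
        cwWeight β M x * φ x) / cwZ β M =
      (∫ t in (-1 : ℝ)..1,
          (∑ x ∈ Fintype.piFinset (fun _ : Fin M => ({-1, 1} : Finset ℝ)),
            (∏ i, ((1 + t * x i) / 2)) * φ x) *
          (Real.exp (-(M / 2) *
              ((1 / β) * ((1 / 2) * Real.log ((1 + t) / (1 - t))) ^ 2 +
                Real.log (1 - t ^ 2))) / (1 - t ^ 2))) /
      (∫ t in (-1 : ℝ)..1,
          Real.exp (-(M / 2) *
              ((1 / β) * ((1 / 2) * Real.log ((1 + t) / (1 - t))) ^ 2 +
                Real.log (1 - t ^ 2))) / (1 - t ^ 2)) := by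
  have hden : (∫ t in (-1 : ℝ)..1,
      Real.exp (-(M / 2) *
          ((1 / β) * ((1 / 2) * Real.log ((1 + t) / (1 - t))) ^ 2 +
            Real.log (1 - t ^ 2))) / (1 - t ^ 2))
      = ∫ t in (-1 : ℝ)..1,
          (∑ x ∈ Fintype.piFinset (fun _ : Fin M => ({-1, 1} : Finset ℝ)),
            (∏ i, ((1 + t * x i) / 2)) * (fun _ : Fin M → ℝ => (1:ℝ)) x) *
          (Real.exp (-(M / 2) *
              ((1 / β) * ((1 / 2) * Real.log ((1 + t) / (1 - t))) ^ 2 +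
                Real.log (1 - t ^ 2))) / (1 - t ^ 2)) := by
    refine intervalIntegral.integral_congr fun t _ => ?_
    simp only [mul_one]
    rw [my_sum_prod_one, one_mul]
  rw [hden, my_main β hβ M hM φ, my_main β hβ M hM (fun _ => (1:ℝ))]
  simp only [mul_one]
  rw [← cwZ]
  have hc : Real.sqrt (Real.pi / ((M:ℝ) / (2 * β))) / 2 ^ M ≠ 0 := by
    have : 0 < Real.pi / ((M:ℝ) / (2 * β)) := by positivity
    positivity
  rw [mul_div_mul_left _ _ hc]
end
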